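/- arXiv:2312.04505 — 4 statements merged into one kernel-verified Lean document; each statement's English description precedes it below -/
import Mathlib

section
/- Let χ : ℚ₂^× → ℂ^× be a character with conductor a(χ). If a(χ) ∈ {2, 3}, then a(χ²) = 0; and if a(χ) ≥ 4, then a(χ²) = a(χ) − 1. -/
/-!
Characters of `ℚ₂^×` and their conductors.

A character of `ℚ₂^×` is a group homomorphism `χ : ℚ₂ˣ →* ℂˣ` which is trivial on
`U^i` for some `i ≥ 0`, where `U^0 = ℤ₂ˣ = {u : ‖u‖ = 1}` and
`U^i = 1 + 2^i ℤ₂ = {u : ‖u‖ = 1 ∧ ‖u - 1‖ ≤ 2^{-i}}` for `i ≥ 1`.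
-/

/-- `χ` is trivial on the unit subgroup `U_p^i`. -/
def IsTrivialOn (p : ℕ) [Fact p.Prime] (χ : (ℚ_[p])ˣ →* ℂˣ) (i : ℕ) : Prop :=
  ∀ u : (ℚ_[p])ˣ, ‖(u : ℚ_[p])‖ = 1 → ‖(u : ℚ_[p]) - 1‖ ≤ (p : ℝ) ^ (-(i : ℤ)) → χ u = 1

/-- The conductor `a(χ)`: the smallest `i` such that `χ` is trivial on `U_p^i`. -/
noncomputable def charConductor (p : ℕ) [Fact p.Prime] (χ : (ℚ_[p])ˣ →* ℂˣ) : ℕ :=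
  sInf {i | IsTrivialOn p χ i}



open PadicInt

-- discreteness in ℚ_[2]
lemma qdisc {x : ℚ_[2]} {n : ℤ} (h : ‖x‖ < (2:ℝ)^(n+1)) : ‖x‖ ≤ (2:ℝ)^n := by
  have := (Padic.norm_le_pow_iff_norm_lt_pow_add_one x n).2
  simpa using this (by simpa using h)

-- residue: norm-1 elements are ≡ 1 mod 2
lemma qres {x : ℚ_[2]} (h : ‖x‖ = 1) : ‖x - 1‖ ≤ (2:ℝ)^(-1:ℤ) := by
  set z : ℤ_[2] := ⟨x, le_of_eq h⟩ with hz
  have hzn : ‖z‖ = 1 := h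
  have h1 : toZMod z = 1 := by
    have h0 : toZMod z ≠ 0 := by
      intro h0
      have : z ∈ RingHom.ker (toZMod : ℤ_[2] →+* ZMod 2) := h0
      rw [ker_toZMod, IsLocalRing.mem_maximalIdeal, mem_nonunits] at this
      rw [hzn] at this; exact lt_irrefl _ this
    have h01 : ∀ c : ZMod 2, c = 0 ∨ c = 1 := by decide
    rcases h01 (toZMod z) with hc | hc
    · exact absurd hc h0
    · exact hc
  have : z - 1 ∈ RingHom.ker (toZMod : ℤ_[2] →+* ZMod 2) := by
    simp [RingHom.mem_ker, h1]
  rw [ker_toZMod, IsLocalRing.mem_maximalIdeal, mem_nonunits] at this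
  have : ‖x - 1‖ < 1 := by
    have hc : ((z - 1 : ℤ_[2]) : ℚ_[2]) = x - 1 := by push_cast [hz]; rfl
    rwa [PadicInt.norm_def, hc] at this
  have := qdisc (n := -1) (by simpa using this)
  simpa using this

lemma norm_two : ‖(2 : ℚ_[2])‖ = (2:ℝ)^(-1:ℤ) := by
  have : ‖((2:ℕ) : ℚ_[2])‖ = ((2:ℕ) : ℝ)⁻¹ := Padic.norm_p
  simpa using this

lemma qadd1 {x : ℚ_[2]} (h : ‖x - 1‖ ≤ (2:ℝ)^(-1:ℤ)) : ‖x + 1‖ ≤ (2:ℝ)^(-1:ℤ) := by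
  have : x + 1 = (x - 1) + 2 := by ring
  rw [this]
  refine le_trans (Padic.nonarchimedean _ _) ?_
  rw [norm_two]
  exact max_le h le_rfl

lemma sq_mem {j : ℕ} (hj : 1 ≤ j) {x : ℚ_[2]} (h2 : ‖x - 1‖ ≤ (2:ℝ)^(-(j:ℤ))) :
    ‖x^2 - 1‖ ≤ (2:ℝ)^(-((j:ℤ)+1)) := by
  have hx1 : ‖x - 1‖ ≤ (2:ℝ)^(-1:ℤ) := by
    refine le_trans h2 ?_
    apply zpow_le_zpow_right₀ (by norm_num)
    omega
  have h3 := qadd1 hx1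
  have : x^2 - 1 = (x - 1) * (x + 1) := by ring
  rw [this, _root_.norm_mul, show -((j:ℤ)+1) = (-(j:ℤ)) + (-1) by ring, zpow_add₀ (by norm_num : (2:ℝ) ≠ 0)]
  exact mul_le_mul h2 h3 (norm_nonneg _) (by positivity)

lemma sq_unit {x : ℚ_[2]} (h : ‖x‖ = 1) : ‖x^2 - 1‖ ≤ (2:ℝ)^(-(3:ℤ)) := by
  have h1 := qres h
  have key : ‖x - 1‖ * ‖x + 1‖ ≤ (2:ℝ)^(-(3:ℤ)) := by
    rcases lt_or_eq_of_le h1 with hlt | heq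
    · -- ‖x-1‖ ≤ 1/4
      have h14 : ‖x - 1‖ ≤ (2:ℝ)^(-2:ℤ) := by
        apply qdisc; norm_num at hlt ⊢; linarith
      have h3 := qadd1 h1
      calc ‖x - 1‖ * ‖x + 1‖ ≤ (2:ℝ)^(-2:ℤ) * (2:ℝ)^(-1:ℤ) :=
            mul_le_mul h14 h3 (norm_nonneg _) (by positivity)
        _ = (2:ℝ)^(-(3:ℤ)) := by norm_num
    · -- ‖x-1‖ = 1/2, show ‖x+1‖ ≤ 1/4
      have hy : ‖(x - 1)/2‖ = 1 := by
        rw [norm_div, heq, norm_two]; norm_num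
      have hy2 : ‖-((x-1)/2)‖ = 1 := by rwa [norm_neg]
      have := qres hy2
      have h4 : ‖x + 1‖ ≤ (2:ℝ)^(-2:ℤ) := by
        have hx1 : x + 1 = -(2 * (-((x-1)/2) - 1)) := by ring
        rw [hx1, norm_neg, _root_.norm_mul, norm_two]
        calc (2:ℝ)^(-1:ℤ) * ‖-((x-1)/2) - 1‖ ≤ (2:ℝ)^(-1:ℤ) * (2:ℝ)^(-1:ℤ) := by
              apply mul_le_mul_of_nonneg_left this (by positivity)
          _ = (2:ℝ)^(-2:ℤ) := by norm_num
      calc ‖x - 1‖ * ‖x + 1‖ ≤ (2:ℝ)^(-1:ℤ) * (2:ℝ)^(-2:ℤ) :=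
            mul_le_mul h1 h4 (norm_nonneg _) (by positivity)
        _ = (2:ℝ)^(-(3:ℤ)) := by norm_num
  have : x^2 - 1 = (x - 1) * (x + 1) := by ring
  rw [this, _root_.norm_mul]; exact key

lemma sqrt_exists {j : ℕ} (hj : 2 ≤ j) {w : ℚ_[2]} (h1 : ‖w‖ = 1)
    (h2 : ‖w - 1‖ ≤ (2:ℝ)^(-((j:ℤ)+1))) :
    ∃ z : ℚ_[2], z^2 = w ∧ ‖z‖ = 1 ∧ ‖z - 1‖ ≤ (2:ℝ)^(-(j:ℤ)) := by
  set W : ℤ_[2] := ⟨w, le_of_eq h1⟩ with hW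
  set F : Polynomial ℤ_[2] := Polynomial.X ^ 2 - Polynomial.C W with hF
  have hderiv : F.derivative = Polynomial.C 2 * Polynomial.X := by
    simp [hF, Polynomial.derivative_pow]
  have heval1 : F.eval 1 = 1 - W := by simp [hF]
  have hdeval1 : F.derivative.eval 1 = 2 := by simp [hderiv]
  have hnorm2 : ‖(2 : ℤ_[2])‖ = (2:ℝ)^(-1:ℤ) := by
    have : ‖((2:ℕ) : ℤ_[2])‖ = ((2:ℕ) : ℝ)⁻¹ := PadicInt.norm_p
    simpa using this
  have hcoe : ((1 - W : ℤ_[2]) : ℚ_[2]) = 1 - w := by push_cast [hW]; rfl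
  have hnormF : ‖F.eval 1‖ < ‖F.derivative.eval 1‖ ^ 2 := by
    rw [heval1, hdeval1, hnorm2, PadicInt.norm_def, hcoe]
    have : ‖(1:ℚ_[2]) - w‖ = ‖w - 1‖ := by rw [← norm_neg]; ring_nf
    rw [this]
    refine lt_of_le_of_lt h2 ?_
    have : ((2:ℝ)^(-1:ℤ))^2 = (2:ℝ)^(-2:ℤ) := by norm_num
    rw [this]
    apply zpow_lt_zpow_right₀ (by norm_num)
    omega
  obtain ⟨z, hz0, hzdist, -, -⟩ := hensels_lemma hnormF
  have hzsq : (z : ℚ_[2])^2 = w := by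
    have : z^2 = W := by
      have := hz0
      simp [hF] at this
      linear_combination this
    calc ((z:ℚ_[2]))^2 = ((z^2 : ℤ_[2]) : ℚ_[2]) := by push_cast; ring
      _ = w := by rw [this]
  have hzn : ‖(z : ℚ_[2])‖ = 1 := by
    have hsq : ‖(z:ℚ_[2])‖ * ‖(z:ℚ_[2])‖ = 1 := by
      rw [← _root_.norm_mul, ← sq, hzsq, h1]
    nlinarith [norm_nonneg (z : ℚ_[2])]
  -- ‖z - 1‖ ≤ 1/4
  have hz14 : ‖(z:ℚ_[2]) - 1‖ ≤ (2:ℝ)^(-2:ℤ) := by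
    apply qdisc
    rw [Polynomial.coe_aeval_eq_eval, hdeval1, hnorm2] at hzdist
    have hc : ((z - 1 : ℤ_[2]) : ℚ_[2]) = (z:ℚ_[2]) - 1 := by push_cast; ring
    rw [PadicInt.norm_def, hc] at hzdist
    norm_num at hzdist ⊢
    linarith
  -- ‖z + 1‖ = 1/2 exactly
  have hzp1 : ‖(z:ℚ_[2]) + 1‖ = (2:ℝ)^(-1:ℤ) := by
    have hne : ‖(z:ℚ_[2]) - 1‖ ≠ ‖(2:ℚ_[2])‖ := by
      rw [norm_two]
      intro hc
      rw [hc] at hz14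
      norm_num at hz14
    have : (z:ℚ_[2]) + 1 = ((z:ℚ_[2]) - 1) + 2 := by ring
    rw [this, Padic.add_eq_max_of_ne hne, norm_two]
    rw [max_eq_right]
    refine le_trans hz14 ?_
    norm_num
  refine ⟨z, hzsq, hzn, ?_⟩
  have hprod : ‖(z:ℚ_[2]) - 1‖ * ((2:ℝ)^(-1:ℤ)) ≤ (2:ℝ)^(-((j:ℤ)+1)) := by
    rw [← hzp1, ← _root_.norm_mul]
    have : ((z:ℚ_[2]) - 1) * ((z:ℚ_[2]) + 1) = w - 1 := by
      linear_combination hzsq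
    rw [this]; exact h2
  have : (2:ℝ)^(-((j:ℤ)+1)) = (2:ℝ)^(-(j:ℤ)) * (2:ℝ)^(-1:ℤ) := by
    rw [← zpow_add₀ (by norm_num : (2:ℝ) ≠ 0)]; ring_nf
  rw [this] at hprod
  have h2pos : (0:ℝ) < (2:ℝ)^(-1:ℤ) := by positivity
  exact le_of_mul_le_mul_right (by linarith) h2pos

lemma trivialOn_mono {χ : (ℚ_[2])ˣ →* ℂˣ} {i j : ℕ} (h : IsTrivialOn 2 χ i) (hij : i ≤ j) :
    IsTrivialOn 2 χ j := by
  intro u hu hu2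
  refine h u hu (le_trans hu2 ?_)
  apply zpow_le_zpow_right₀
  · norm_num
  · omega

lemma cast_two_real : ((2:ℕ) : ℝ) = 2 := by norm_num

/-- Let `χ` be a character of `ℚ₂^×` with conductor `a(χ)`.
If `a(χ) ∈ {2, 3}` then `a(χ²) = 0`, and if `a(χ) ≥ 4` then `a(χ²) = a(χ) - 1`. -/
theorem charConductor_sq_two (χ : (ℚ_[2])ˣ →* ℂˣ) (hchar : ∃ i, IsTrivialOn 2 χ i) :
    ((charConductor 2 χ = 2 ∨ charConductor 2 χ = 3) → charConductor 2 (χ ^ 2) = 0) ∧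
    (4 ≤ charConductor 2 χ → charConductor 2 (χ ^ 2) = charConductor 2 χ - 1) := by
  set a := charConductor 2 χ with ha
  have hmem : IsTrivialOn 2 χ a := Nat.sInf_mem hchar
  have hpow : ∀ (u : (ℚ_[2])ˣ), (χ ^ 2) u = χ (u * u) := by
    intro u
    simp [pow_two]
  have hnormsq : ∀ (u : (ℚ_[2])ˣ), ‖(u : ℚ_[2])‖ = 1 → ‖((u*u : (ℚ_[2])ˣ) : ℚ_[2])‖ = 1 := by
    intro u hu
    rw [Units.val_mul, _root_.norm_mul, hu, one_mul]
  constructor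
  · intro hcase
    have h3 : IsTrivialOn 2 χ 3 := by
      rcases hcase with h | h <;> exact trivialOn_mono hmem (by omega)
    have h0 : IsTrivialOn 2 (χ ^ 2) 0 := by
      intro u hu _
      rw [hpow u]
      refine h3 (u * u) (hnormsq u hu) ?_
      rw [Units.val_mul, ← sq, cast_two_real]
      exact sq_unit hu
    exact Nat.sInf_eq_zero.mpr (Or.inl h0)
  · intro h4
    have t1 : IsTrivialOn 2 (χ ^ 2) (a - 1) := by
      intro u hu hu2
      rw [hpow u]
      refine hmem (u * u) (hnormsq u hu) ?_
      rw [Units.val_mul, ← sq, cast_two_real]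
      have := sq_mem (j := a - 1) (by omega) (by rw [cast_two_real] at hu2; exact hu2)
      refine le_trans this (le_of_eq ?_)
      congr 1
      omega
    have t2 : ¬ IsTrivialOn 2 (χ ^ 2) (a - 2) := by
      intro h
      have hclaim : IsTrivialOn 2 χ (a - 1) := by
        intro u hu hu2
        have hcast : (((a:ℕ) - 1 : ℕ) : ℤ) = ((a - 2 : ℕ) : ℤ) + 1 := by omega
        obtain ⟨z, hzsq, hzn, hz1⟩ := sqrt_exists (j := a - 2) (by omega) hu
          (by rw [cast_two_real, ← hcast] at *; exact hu2)
        have hz0 : z ≠ 0 := by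
          intro h0; rw [h0] at hzn; simp at hzn
        set v : (ℚ_[2])ˣ := Units.mk0 z hz0 with hv
        have hv2 : v * v = u := by
          ext
          rw [Units.val_mul, hv, Units.val_mk0, ← sq, hzsq]
        have := h v hzn (by rw [cast_two_real]; exact hz1)
        rw [hpow v, hv2] at this
        exact this
      exact Nat.notMem_of_lt_sInf (show a - 1 < a by omega) hclaim
    have hle : charConductor 2 (χ ^ 2) ≤ a - 1 := Nat.sInf_le t1
    have hge : ¬ (charConductor 2 (χ ^ 2) ≤ a - 2) := by
      intro hc
      exact t2 (trivialOn_mono (Nat.sInf_mem (s := {i | IsTrivialOn 2 (χ ^ 2) i}) ⟨_, t1⟩) hc)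
    omega
end

section
/- Let G be a group, H a subgroup of G of index 2, σ an element of G not in H, and κ : H → ℂ^× a group homomorphism with κ^σ ≠ κ, where κ^σ(x) = κ(σxσ⁻¹) for x ∈ H. Then there is a unique group homomorphism θ : G → ℂ^× satisfying θ(x) = κ(x)κ^σ(x) for all x ∈ H and θ(σ) = κ(σ²), and the symmetric square of the induced representation satisfies Sym²(Ind_H^G(κ)) ≅ Ind_H^G(κ²) ⊕ θ as complex representations of G. -/
/-!
Induced representations, symmetric squares, and the decomposition
`Sym²(Ind_H^G κ) ≅ Ind_H^G (κ²) ⊕ θ` for an index-two subgroup `H ≤ G`.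

`Ind_H^G κ` is realized on the space of functions `f : G → ℂ` with `f(hg) = κ(h)f(g)`
for `h ∈ H`, with `G` acting by right translation; `Sym²(V)` is the quotient of
`V ⊗ V` by the span of the tensors `x ⊗ y − y ⊗ x`.  Since `H` has index two it is
normal, so the conjugate character `κ^σ(x) = κ(σxσ⁻¹)` is encoded below by pairs
`(h, h') ∈ H × H` with `σ h σ⁻¹ = h'`.
-/

open scoped TensorProduct

variable {G : Type*} [Group G]

/-- The space of the induced representation `Ind_H^G κ`: functions `f : G → ℂ` with
`f (h g) = κ(h) f(g)` for `h ∈ H`. -/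
noncomputable def indCarrier (H : Subgroup G) (κ : H →* ℂˣ) : Submodule ℂ (G → ℂ) where
  carrier := {f | ∀ (h : H) (g : G), f ((h : G) * g) = (κ h : ℂ) * f g}
  add_mem' := fun {a b} ha hb h g => by
    simp only [Pi.add_apply, ha h g, hb h g]; ring
  zero_mem' := fun h g => by simp
  smul_mem' := fun c a ha h g => by
    simp only [Pi.smul_apply, smul_eq_mul, ha h g]; ring

/-- The induced representation `Ind_H^G κ`, acting by right translation. -/
noncomputable def indRep (H : Subgroup G) (κ : H →* ℂˣ) : Representation ℂ G (indCarrier H κ) where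
  toFun g :=
    { toFun := fun f => ⟨fun x => (f : G → ℂ) (x * g), fun h x => by
        simpa [mul_assoc] using f.2 h (x * g)⟩
      map_add' := fun f₁ f₂ => rfl
      map_smul' := fun c f => rfl }
  map_one' := by
    ext f x
    simp
  map_mul' g₁ g₂ := by
    ext f x
    simp [mul_assoc]

/-- The subspace of `V ⊗ V` spanned by the antisymmetric tensors `x ⊗ y − y ⊗ x`. -/
noncomputable def symRel (V : Type*) [AddCommGroup V] [Module ℂ V] :
    Submodule ℂ (V ⊗[ℂ] V) :=
  Submodule.span ℂ {z | ∃ x y : V, z = x ⊗ₜ[ℂ] y - y ⊗ₜ[ℂ] x}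

/-- The symmetric square `Sym²(V) = (V ⊗ V) / ⟨x ⊗ y − y ⊗ x⟩`. -/
abbrev Sym2Space (V : Type*) [AddCommGroup V] [Module ℂ V] :=
  (V ⊗[ℂ] V) ⧸ symRel V

theorem symRel_le {V : Type*} [AddCommGroup V] [Module ℂ V] (ρ : Representation ℂ G V)
    (g : G) : symRel V ≤ (symRel V).comap (TensorProduct.map (ρ g) (ρ g)) := by
  rw [symRel, Submodule.span_le]
  rintro z ⟨x, y, rfl⟩
  simp only [SetLike.mem_coe, Submodule.mem_comap, map_sub, TensorProduct.map_tmul]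
  exact Submodule.subset_span ⟨ρ g x, ρ g y, rfl⟩

/-- The symmetric square of a representation. -/
noncomputable def sym2Rep {V : Type*} [AddCommGroup V] [Module ℂ V]
    (ρ : Representation ℂ G V) : Representation ℂ G (Sym2Space V) where
  toFun g := Submodule.mapQ (symRel V) (symRel V)
    (TensorProduct.map (ρ g) (ρ g)) (symRel_le ρ g)
  map_one' := by
    apply Submodule.linearMap_qext
    ext x y
    simp
  map_mul' g₁ g₂ := by
    apply Submodule.linearMap_qext
    ext x y
    simp [TensorProduct.map_tmul]

/-- The one-dimensional representation on `ℂ` given by a character `θ : G →* ℂˣ`. -/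
noncomputable def charRep (θ : G →* ℂˣ) : Representation ℂ G ℂ where
  toFun g := (θ g : ℂ) • LinearMap.id
  map_one' := by
    refine LinearMap.ext fun x => ?_
    simp
  map_mul' g₁ g₂ := by
    refine LinearMap.ext fun x => ?_
    simp [Module.End.mul_apply, mul_comm, mul_assoc, mul_left_comm]

/-- The direct sum of two representations. -/
noncomputable def prodRep {V₁ V₂ : Type*} [AddCommGroup V₁] [Module ℂ V₁]
    [AddCommGroup V₂] [Module ℂ V₂] (ρ₁ : Representation ℂ G V₁)
    (ρ₂ : Representation ℂ G V₂) : Representation ℂ G (V₁ × V₂) where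
  toFun g := (ρ₁ g).prodMap (ρ₂ g)
  map_one' := by simp [LinearMap.prodMap_one]
  map_mul' g₁ g₂ := by simp [LinearMap.prodMap_mul]

/-- Two representations are isomorphic (equivalent): there is an equivariant linear
equivalence between their spaces. -/
def RepIso {V₁ V₂ : Type*} [AddCommGroup V₁] [Module ℂ V₁] [AddCommGroup V₂]
    [Module ℂ V₂] (ρ₁ : Representation ℂ G V₁) (ρ₂ : Representation ℂ G V₂) : Prop :=
  ∃ e : V₁ ≃ₗ[ℂ] V₂, ∀ (g : G) (x : V₁), e (ρ₁ g x) = ρ₂ g (e x)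


namespace Sym2IndAux

variable {G : Type*} [Group G]

open scoped Classical in
/-- `κ` extended by `1` to all of `G`. -/
noncomputable def cfun (H : Subgroup G) (κ : H →* ℂˣ) : G → ℂˣ :=
  fun g => if hg : g ∈ H then κ ⟨g, hg⟩ else 1

lemma cfun_of_mem {H : Subgroup G} (κ : H →* ℂˣ) {g : G} (hg : g ∈ H) :
    cfun H κ g = κ ⟨g, hg⟩ := dif_pos hg

lemma cfun_mul {H : Subgroup G} (κ : H →* ℂˣ) {a b : G} (ha : a ∈ H) (hb : b ∈ H) :
    cfun H κ (a * b) = cfun H κ a * cfun H κ b := by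
  rw [cfun_of_mem κ ha, cfun_of_mem κ hb, cfun_of_mem κ (H.mul_mem ha hb), ← map_mul]
  rfl

lemma cfun_one {H : Subgroup G} (κ : H →* ℂˣ) : cfun H κ 1 = 1 := by
  rw [cfun_of_mem κ H.one_mem]
  exact map_one κ

lemma cfun_conj {H : Subgroup G} (κ : H →* ℂˣ) {s a : G} (hs : s ∈ H) (ha : a ∈ H) :
    cfun H κ (s * a * s⁻¹) = cfun H κ a := by
  rw [cfun_mul κ (H.mul_mem hs ha) (H.inv_mem hs), cfun_mul κ hs ha]
  have h1 : cfun H κ s * cfun H κ s⁻¹ = 1 := by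
    rw [← cfun_mul κ hs (H.inv_mem hs), mul_inv_cancel, cfun_one]
  calc cfun H κ s * cfun H κ a * cfun H κ s⁻¹
      = cfun H κ a * (cfun H κ s * cfun H κ s⁻¹) := by
        rw [mul_comm (cfun H κ s) (cfun H κ a), mul_assoc]
    _ = cfun H κ a := by rw [h1, mul_one]

lemma conj_mem {H : Subgroup G} (hH : H.index = 2) {a : G} (ha : a ∈ H) (σ : G) :
    σ * a * σ⁻¹ ∈ H := by
  rw [Subgroup.mul_mem_iff_of_index_two hH, Subgroup.mul_mem_iff_of_index_two hH,
    H.inv_mem_iff]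
  tauto

lemma coset_mem {H : Subgroup G} (hH : H.index = 2) {σ g : G} (hσ : σ ∉ H) (hg : g ∉ H) :
    g * σ⁻¹ ∈ H := by
  rw [Subgroup.mul_mem_iff_of_index_two hH, H.inv_mem_iff]
  tauto

open scoped Classical in
/-- The character `θ`: on `H` it is `κ · κ^σ`, and on the nontrivial coset
`θ(hσ) = κ(h)·κ^σ(h)·κ(σ²)`. -/
noncomputable def thetaFun (H : Subgroup G) (σ : G) (κ : H →* ℂˣ) : G → ℂˣ :=
  fun g =>
    if g ∈ H then cfun H κ g * cfun H κ (σ * g * σ⁻¹)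
    else cfun H κ (g * σ⁻¹) * cfun H κ (σ * (g * σ⁻¹) * σ⁻¹) * cfun H κ (σ * σ)

lemma units_comm4 (a b c d : ℂˣ) : a * b * (c * d) = a * c * (b * d) := by
  ext; push_cast; ring

lemma thetaFun_mul {H : Subgroup G} (hH : H.index = 2) {σ : G} (hσ : σ ∉ H)
    (κ : H →* ℂˣ) (x y : G) :
    thetaFun H σ κ (x * y) = thetaFun H σ κ x * thetaFun H σ κ y := by
  have sqmem : σ * σ ∈ H := Subgroup.mul_self_mem_of_index_two hH σ
  by_cases hx : x ∈ H <;> by_cases hy : y ∈ H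
  · have hxy : x * y ∈ H := H.mul_mem hx hy
    rw [thetaFun, thetaFun, thetaFun, if_pos hxy, if_pos hx, if_pos hy]
    have e : σ * (x * y) * σ⁻¹ = (σ * x * σ⁻¹) * (σ * y * σ⁻¹) := by group
    rw [e, cfun_mul κ hx hy, cfun_mul κ (conj_mem hH hx σ) (conj_mem hH hy σ)]
    exact units_comm4 _ _ _ _
  · have hxy : x * y ∉ H := by
      rw [Subgroup.mul_mem_iff_of_index_two hH]; tauto
    rw [thetaFun, thetaFun, thetaFun, if_neg hxy, if_pos hx, if_neg hy]
    have hys : y * σ⁻¹ ∈ H := coset_mem hH hσ hy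
    have e1 : x * y * σ⁻¹ = x * (y * σ⁻¹) := by group
    have e2 : σ * (x * y * σ⁻¹) * σ⁻¹ = (σ * x * σ⁻¹) * (σ * (y * σ⁻¹) * σ⁻¹) := by group
    rw [e2, e1, cfun_mul κ hx hys, cfun_mul κ (conj_mem hH hx σ) (conj_mem hH hys σ)]
    ext; push_cast; ring
  · have hxy : x * y ∉ H := by
      rw [Subgroup.mul_mem_iff_of_index_two hH]; tauto
    rw [thetaFun, thetaFun, thetaFun, if_neg hxy, if_neg hx, if_pos hy]
    have hxs : x * σ⁻¹ ∈ H := coset_mem hH hσ hx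
    have e1 : x * y * σ⁻¹ = (x * σ⁻¹) * (σ * y * σ⁻¹) := by group
    have e2 : σ * (x * y * σ⁻¹) * σ⁻¹
        = (σ * (x * σ⁻¹) * σ⁻¹) * ((σ * σ) * y * (σ * σ)⁻¹) := by group
    rw [e2, e1, cfun_mul κ hxs (conj_mem hH hy σ),
      cfun_mul κ (conj_mem hH hxs σ) (H.mul_mem (H.mul_mem sqmem hy) (H.inv_mem sqmem)),
      cfun_conj κ sqmem hy]
    ext; push_cast; ring
  · have hxy : x * y ∈ H := by
      rw [Subgroup.mul_mem_iff_of_index_two hH]; tauto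
    rw [thetaFun, thetaFun, thetaFun, if_pos hxy, if_neg hx, if_neg hy]
    have hxs : x * σ⁻¹ ∈ H := coset_mem hH hσ hx
    have hys : y * σ⁻¹ ∈ H := coset_mem hH hσ hy
    have e1 : x * y = (x * σ⁻¹) * (σ * (y * σ⁻¹) * σ⁻¹) * (σ * σ) := by group
    have e2 : σ * (x * y) * σ⁻¹
        = (σ * (x * σ⁻¹) * σ⁻¹) * ((σ * σ) * (y * σ⁻¹) * (σ * σ)⁻¹) * (σ * σ) := by group
    rw [e2, e1,
      cfun_mul κ (H.mul_mem hxs (conj_mem hH hys σ)) sqmem,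
      cfun_mul κ hxs (conj_mem hH hys σ),
      cfun_mul κ (H.mul_mem (conj_mem hH hxs σ)
        (H.mul_mem (H.mul_mem sqmem hys) (H.inv_mem sqmem))) sqmem,
      cfun_mul κ (conj_mem hH hxs σ) (H.mul_mem (H.mul_mem sqmem hys) (H.inv_mem sqmem)),
      cfun_conj κ sqmem hys]
    ext; push_cast; ring

end Sym2IndAux


namespace Sym2IndAux

variable {G : Type*} [Group G]

/-- The character `θ : G →* ℂˣ`. -/
noncomputable def theta {H : Subgroup G} (hH : H.index = 2) {σ : G} (hσ : σ ∉ H)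
    (κ : H →* ℂˣ) : G →* ℂˣ :=
  MonoidHom.mk' (thetaFun H σ κ) (thetaFun_mul hH hσ κ)

lemma theta_apply_mem {H : Subgroup G} (hH : H.index = 2) {σ : G} (hσ : σ ∉ H)
    (κ : H →* ℂˣ) {g : G} (hg : g ∈ H) :
    theta hH hσ κ g = κ ⟨g, hg⟩ * κ ⟨σ * g * σ⁻¹, conj_mem hH hg σ⟩ := by
  show thetaFun H σ κ g = _
  rw [thetaFun, if_pos hg, cfun_of_mem κ hg, cfun_of_mem κ (conj_mem hH hg σ)]

lemma theta_cond1 {H : Subgroup G} (hH : H.index = 2) {σ : G} (hσ : σ ∉ H)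
    (κ : H →* ℂˣ) : ∀ h h' : H, σ * (h : G) * σ⁻¹ = (h' : G) →
    theta hH hσ κ (h : G) = κ h * κ h' := by
  intro h h' hh
  have e1 : (⟨(h : G), h.2⟩ : H) = h := rfl
  have e2 : (⟨σ * (h : G) * σ⁻¹, conj_mem hH h.2 σ⟩ : H) = h' := Subtype.ext hh
  rw [theta_apply_mem hH hσ κ h.2, e1, e2]

lemma theta_cond2 {H : Subgroup G} (hH : H.index = 2) {σ : G} (hσ : σ ∉ H)
    (κ : H →* ℂˣ) : ∀ s : H, (s : G) = σ * σ → theta hH hσ κ σ = κ s := by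
  intro s hs
  have sqmem : σ * σ ∈ H := Subgroup.mul_self_mem_of_index_two hH σ
  show thetaFun H σ κ σ = _
  rw [thetaFun, if_neg hσ]
  have e1 : σ * σ⁻¹ = 1 := mul_inv_cancel σ
  have e2 : σ * (σ * σ⁻¹) * σ⁻¹ = 1 := by group
  rw [e2, cfun_one, mul_one, e1, cfun_one, one_mul, cfun_of_mem κ sqmem]
  exact congrArg κ (Subtype.ext hs.symm)

/-- Any two characters satisfying the two conditions agree. -/
lemma theta_unique {H : Subgroup G} (hH : H.index = 2) {σ : G} (hσ : σ ∉ H)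
    (κ : H →* ℂˣ) (θ₁ θ₂ : G →* ℂˣ)
    (h₁ : (∀ h h' : H, σ * (h : G) * σ⁻¹ = (h' : G) → θ₁ (h : G) = κ h * κ h') ∧
      (∀ s : H, (s : G) = σ * σ → θ₁ σ = κ s))
    (h₂ : (∀ h h' : H, σ * (h : G) * σ⁻¹ = (h' : G) → θ₂ (h : G) = κ h * κ h') ∧
      (∀ s : H, (s : G) = σ * σ → θ₂ σ = κ s)) : θ₁ = θ₂ := by
  classical
  have sqmem : σ * σ ∈ H := Subgroup.mul_self_mem_of_index_two hH σ
  have key : ∀ θ : G →* ℂˣ,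
      ((∀ h h' : H, σ * (h : G) * σ⁻¹ = (h' : G) → θ (h : G) = κ h * κ h') ∧
       (∀ s : H, (s : G) = σ * σ → θ σ = κ s)) → ∀ g : G,
      θ g = if hg : g ∈ H then κ ⟨g, hg⟩ * κ ⟨σ * g * σ⁻¹, conj_mem hH hg σ⟩
        else (κ ⟨g * σ⁻¹, coset_mem hH hσ hg⟩ *
          κ ⟨σ * (g * σ⁻¹) * σ⁻¹, conj_mem hH (coset_mem hH hσ hg) σ⟩) *
          κ ⟨σ * σ, sqmem⟩ := by
    intro θ hθ g
    by_cases hg : g ∈ H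
    · rw [dif_pos hg]
      exact hθ.1 ⟨g, hg⟩ ⟨σ * g * σ⁻¹, conj_mem hH hg σ⟩ rfl
    · rw [dif_neg hg]
      have e : g = (g * σ⁻¹) * σ := by group
      have hmul : θ g = θ (g * σ⁻¹) * θ σ := by
        conv_lhs => rw [e]
        exact map_mul θ _ _
      rw [hmul, hθ.1 ⟨g * σ⁻¹, coset_mem hH hσ hg⟩
          ⟨σ * (g * σ⁻¹) * σ⁻¹, conj_mem hH (coset_mem hH hσ hg) σ⟩ rfl,
        hθ.2 ⟨σ * σ, sqmem⟩ rfl]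
  ext g
  rw [key θ₁ h₁ g, key θ₂ h₂ g]

end Sym2IndAux
namespace Sym2IndAux

section Part2

variable {G : Type*} [Group G]

open scoped Classical in
/-- The basis function supported on the coset `H t`, with value `κ(g t⁻¹)` at `g`. -/
noncomputable def basFun (H : Subgroup G) (κ : H →* ℂˣ) (t : G) : G → ℂ :=
  fun g => if hg : g * t⁻¹ ∈ H then ((κ ⟨g * t⁻¹, hg⟩ : ℂˣ) : ℂ) else 0

open scoped Classical in
lemma basFun_apply (H : Subgroup G) (κ : H →* ℂˣ) (t g : G) :
    basFun H κ t g = if hg : g * t⁻¹ ∈ H then ((κ ⟨g * t⁻¹, hg⟩ : ℂˣ) : ℂ) else 0 := rfl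

lemma basFun_mem (H : Subgroup G) (κ : H →* ℂˣ) (t : G) :
    basFun H κ t ∈ indCarrier H κ := by
  intro h g
  have e : (h : G) * g * t⁻¹ = (h : G) * (g * t⁻¹) := by group
  by_cases hg : g * t⁻¹ ∈ H
  · have hm : (h : G) * g * t⁻¹ ∈ H := by rw [e]; exact H.mul_mem h.2 hg
    rw [basFun_apply, basFun_apply, dif_pos hm, dif_pos hg]
    have : (⟨(h : G) * g * t⁻¹, hm⟩ : H) = h * ⟨g * t⁻¹, hg⟩ := Subtype.ext e
    rw [this, map_mul, Units.val_mul]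
  · have hm : ¬((h : G) * g * t⁻¹ ∈ H) := fun hc =>
      hg ((H.mul_mem_cancel_left h.2).mp (by rwa [← e]))
    rw [basFun_apply, basFun_apply, dif_neg hm, dif_neg hg, mul_zero]

/-- The basis vector of `Ind_H^G κ` supported on the coset `H t`. -/
noncomputable def bas (H : Subgroup G) (κ : H →* ℂˣ) (t : G) : indCarrier H κ :=
  ⟨basFun H κ t, basFun_mem H κ t⟩

lemma mem_of_mem_coset {H : Subgroup G} {σ g : G} (hg : g ∈ H) (hgs : g * σ⁻¹ ∈ H) :
    σ ∈ H := by
  have := H.mul_mem (H.inv_mem hgs) hg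
  rwa [show (g * σ⁻¹)⁻¹ * g = σ by group] at this

lemma basFun_one_of_mem {H : Subgroup G} (κ : H →* ℂˣ) {g : G} (hg : g ∈ H) :
    basFun H κ 1 g = ((κ ⟨g, hg⟩ : ℂˣ) : ℂ) := by
  have hm : g * (1 : G)⁻¹ ∈ H := by simpa using hg
  rw [basFun_apply, dif_pos hm]
  norm_cast
  exact congrArg κ (Subtype.ext (by group))

lemma basFun_one_of_not_mem {H : Subgroup G} (κ : H →* ℂˣ) {g : G} (hg : g ∉ H) :
    basFun H κ 1 g = 0 := by
  rw [basFun_apply, dif_neg (by simpa using hg)]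

lemma basFun_sigma_of_mem {H : Subgroup G} (κ : H →* ℂˣ) {σ g : G} (hgs : g * σ⁻¹ ∈ H) :
    basFun H κ σ g = ((κ ⟨g * σ⁻¹, hgs⟩ : ℂˣ) : ℂ) := dif_pos hgs

lemma basFun_sigma_of_not_mem {H : Subgroup G} (κ : H →* ℂˣ) {σ g : G}
    (hgs : g * σ⁻¹ ∉ H) : basFun H κ σ g = 0 := dif_neg hgs

lemma bas_val_one_one (H : Subgroup G) (κ : H →* ℂˣ) :
    basFun H κ 1 (1 : G) = 1 := by
  rw [basFun_one_of_mem κ H.one_mem, show (⟨(1 : G), H.one_mem⟩ : H) = 1 from rfl,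
    map_one, Units.val_one]

lemma bas_val_one_sigma {H : Subgroup G} (κ : H →* ℂˣ) {σ : G} (hσ : σ ∉ H) :
    basFun H κ 1 σ = 0 := basFun_one_of_not_mem κ hσ

lemma bas_val_sigma_one {H : Subgroup G} (κ : H →* ℂˣ) {σ : G} (hσ : σ ∉ H) :
    basFun H κ σ (1 : G) = 0 := by
  refine basFun_sigma_of_not_mem κ fun hc => hσ ?_
  have := H.inv_mem hc
  rwa [show ((1 : G) * σ⁻¹)⁻¹ = σ by group] at this

lemma bas_val_sigma_sigma (H : Subgroup G) (κ : H →* ℂˣ) (σ : G) :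
    basFun H κ σ σ = 1 := by
  have hm : σ * σ⁻¹ ∈ H := by simpa using H.one_mem
  rw [basFun_sigma_of_mem κ hm,
    show (⟨σ * σ⁻¹, hm⟩ : H) = 1 from Subtype.ext (by simp), map_one, Units.val_one]

/-- Decomposition of an element of `Ind_H^G κ` in terms of the two basis vectors. -/
lemma decomp {H : Subgroup G} (hH : H.index = 2) {σ : G} (hσ : σ ∉ H) (κ : H →* ℂˣ)
    (f : indCarrier H κ) :
    f = f.1 1 • bas H κ 1 + f.1 σ • bas H κ σ := by
  apply Subtype.ext
  funext g
  have hrhs : ((f.1 1 • bas H κ 1 + f.1 σ • bas H κ σ : indCarrier H κ) : G → ℂ) g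
      = f.1 1 * basFun H κ 1 g + f.1 σ * basFun H κ σ g := rfl
  rw [hrhs]
  by_cases hg : g ∈ H
  · have h1 : f.1 g = ((κ ⟨g, hg⟩ : ℂˣ) : ℂ) * f.1 1 := by
      have := f.2 ⟨g, hg⟩ 1
      simpa using this
    have h2 : basFun H κ σ g = 0 :=
      basFun_sigma_of_not_mem κ fun hc => hσ (mem_of_mem_coset hg hc)
    rw [h1, h2, basFun_one_of_mem κ hg, mul_zero, add_zero, mul_comm]
  · have hgs : g * σ⁻¹ ∈ H := coset_mem hH hσ hg
    have h1 : f.1 g = ((κ ⟨g * σ⁻¹, hgs⟩ : ℂˣ) : ℂ) * f.1 σ := by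
      have := f.2 ⟨g * σ⁻¹, hgs⟩ σ
      simpa [show g * σ⁻¹ * σ = g by group] using this
    rw [h1, basFun_one_of_not_mem κ hg, basFun_sigma_of_mem κ hgs, mul_zero, zero_add,
      mul_comm]

end Part2

end Sym2IndAux
namespace Sym2IndAux

section Maps

set_option maxHeartbeats 1000000
set_option synthInstance.maxHeartbeats 400000

variable {G : Type*} [Group G]

/-- Pointwise multiplication `Ind κ × Ind κ → Ind κ²` as a bilinear map. -/
noncomputable def mulHom (H : Subgroup G) (κ : H →* ℂˣ) :
    indCarrier H κ →ₗ[ℂ] indCarrier H κ →ₗ[ℂ] indCarrier H (κ ^ 2) :=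
  LinearMap.mk₂ ℂ
    (fun f f' => ⟨fun g => f.1 g * f'.1 g, fun h g => by
      show f.1 ((h : G) * g) * f'.1 ((h : G) * g) = (((κ ^ 2) h : ℂˣ) : ℂ) * (f.1 g * f'.1 g)
      rw [f.2 h g, f'.2 h g]
      have e : (((κ ^ 2) h : ℂˣ) : ℂ) = ((κ h : ℂˣ) : ℂ) * ((κ h : ℂˣ) : ℂ) := by
        rw [pow_two, MonoidHom.mul_apply, Units.val_mul]
      rw [e]; ring⟩)
    (fun f₁ f₂ f' => by
      apply Subtype.ext; funext g
      show (f₁.1 g + f₂.1 g) * f'.1 g = f₁.1 g * f'.1 g + f₂.1 g * f'.1 g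
      ring)
    (fun c f f' => by
      apply Subtype.ext; funext g
      show (c * f.1 g) * f'.1 g = c * (f.1 g * f'.1 g)
      ring)
    (fun f f₁ f₂ => by
      apply Subtype.ext; funext g
      show f.1 g * (f₁.1 g + f₂.1 g) = f.1 g * f₁.1 g + f.1 g * f₂.1 g
      ring)
    (fun c f f' => by
      apply Subtype.ext; funext g
      show f.1 g * (c * f'.1 g) = c * (f.1 g * f'.1 g)
      ring)

/-- The symmetric bilinear form `B(f, f') = f(1)f'(σ) + f(σ)f'(1)`. -/
noncomputable def BHom (H : Subgroup G) (κ : H →* ℂˣ) (σ : G) :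
    indCarrier H κ →ₗ[ℂ] indCarrier H κ →ₗ[ℂ] ℂ :=
  LinearMap.mk₂ ℂ (fun f f' => f.1 1 * f'.1 σ + f.1 σ * f'.1 1)
    (fun f₁ f₂ f' => by
      show (f₁.1 1 + f₂.1 1) * f'.1 σ + (f₁.1 σ + f₂.1 σ) * f'.1 1 = _
      ring)
    (fun c f f' => by
      show (c * f.1 1) * f'.1 σ + (c * f.1 σ) * f'.1 1 = c * _
      ring)
    (fun f f₁ f₂ => by
      show f.1 1 * (f₁.1 σ + f₂.1 σ) + f.1 σ * (f₁.1 1 + f₂.1 1) = _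
      ring)
    (fun c f f' => by
      show f.1 1 * (c * f'.1 σ) + f.1 σ * (c * f'.1 1) = c * _
      ring)

/-- The combined map `Ind κ ⊗ Ind κ → Ind κ² × ℂ`. -/
noncomputable def Phi (H : Subgroup G) (κ : H →* ℂˣ) (σ : G) :
    (indCarrier H κ ⊗[ℂ] indCarrier H κ) →ₗ[ℂ] (indCarrier H (κ ^ 2) × ℂ) :=
  (TensorProduct.lift (mulHom H κ)).prod (TensorProduct.lift (BHom H κ σ))

lemma Phi_tmul (H : Subgroup G) (κ : H →* ℂˣ) (σ : G) (f f' : indCarrier H κ) :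
    Phi H κ σ (f ⊗ₜ[ℂ] f') = (mulHom H κ f f', BHom H κ σ f f') := by
  simp [Phi, TensorProduct.lift.tmul]

lemma Phi_vanish (H : Subgroup G) (κ : H →* ℂˣ) (σ : G) :
    symRel (indCarrier H κ) ≤ LinearMap.ker (Phi H κ σ) := by
  rw [symRel, Submodule.span_le]
  rintro z ⟨x, y, rfl⟩
  simp only [SetLike.mem_coe, LinearMap.mem_ker, map_sub, Phi_tmul]
  have h1 : mulHom H κ x y = mulHom H κ y x := by
    apply Subtype.ext; funext g
    show x.1 g * y.1 g = y.1 g * x.1 g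
    ring
  have h2 : BHom H κ σ x y = BHom H κ σ y x := by
    show x.1 1 * y.1 σ + x.1 σ * y.1 1 = y.1 1 * x.1 σ + y.1 σ * x.1 1
    ring
  rw [h1, h2, Prod.mk_sub_mk, sub_self, sub_self]
  rfl

/-- Evaluation at a point, as a linear map. -/
noncomputable def evAt (H : Subgroup G) (κ : H →* ℂˣ) (x : G) :
    indCarrier H κ →ₗ[ℂ] ℂ :=
  (LinearMap.proj x).comp (indCarrier H κ).subtype

/-- The inverse map `Ind κ² × ℂ → Ind κ ⊗ Ind κ` (before passing to the quotient). -/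
noncomputable def Psi0 (H : Subgroup G) (κ : H →* ℂˣ) (σ : G) :
    (indCarrier H (κ ^ 2) × ℂ) →ₗ[ℂ] (indCarrier H κ ⊗[ℂ] indCarrier H κ) :=
  (LinearMap.toSpanSingleton ℂ _ (bas H κ 1 ⊗ₜ[ℂ] bas H κ 1)).comp
      ((evAt H (κ ^ 2) 1).comp (LinearMap.fst ℂ _ ℂ))
    + (LinearMap.toSpanSingleton ℂ _ (bas H κ σ ⊗ₜ[ℂ] bas H κ σ)).comp
      ((evAt H (κ ^ 2) σ).comp (LinearMap.fst ℂ _ ℂ))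
    + (LinearMap.toSpanSingleton ℂ _ (bas H κ 1 ⊗ₜ[ℂ] bas H κ σ)).comp
      (LinearMap.snd ℂ _ ℂ)

lemma Psi0_apply (H : Subgroup G) (κ : H →* ℂˣ) (σ : G) (F : indCarrier H (κ ^ 2)) (c : ℂ) :
    Psi0 H κ σ (F, c)
      = F.1 1 • (bas H κ 1 ⊗ₜ[ℂ] bas H κ 1) + F.1 σ • (bas H κ σ ⊗ₜ[ℂ] bas H κ σ)
        + c • (bas H κ 1 ⊗ₜ[ℂ] bas H κ σ) := by
  simp [Psi0, evAt, LinearMap.toSpanSingleton_apply]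

end Maps

end Sym2IndAux
namespace Sym2IndAux

section Generic

variable {G : Type*} [Group G]

/-- Generic construction of an isomorphism `Sym²(V) ≅ W` from a map `f : V ⊗ V → W`
vanishing on antisymmetric tensors together with a section `g0`. -/
theorem sym2RepIso {V W : Type*} [AddCommGroup V] [Module ℂ V]
    [AddCommGroup W] [Module ℂ W] (ρ : Representation ℂ G V) (τ : Representation ℂ G W)
    (f : V ⊗[ℂ] V →ₗ[ℂ] W) (g0 : W →ₗ[ℂ] V ⊗[ℂ] V)
    (hker : symRel V ≤ LinearMap.ker f)
    (h1 : f.comp g0 = LinearMap.id)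
    (h2 : ∀ z : V ⊗[ℂ] V, g0 (f z) - z ∈ symRel V)
    (hequiv : ∀ (g : G) (z : V ⊗[ℂ] V),
      f (TensorProduct.map (ρ g) (ρ g) z) = τ g (f z)) :
    RepIso (sym2Rep ρ) τ := by
  have e1 : (Submodule.liftQ (symRel V) f hker).comp ((symRel V).mkQ.comp g0)
      = LinearMap.id := by
    apply LinearMap.ext
    intro w
    have := LinearMap.congr_fun h1 w
    simpa using this
  have e2 : ((symRel V).mkQ.comp g0).comp (Submodule.liftQ (symRel V) f hker)
      = LinearMap.id := by
    refine Submodule.linearMap_qext _ ?_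
    apply LinearMap.ext
    intro z
    simp only [LinearMap.comp_apply, Submodule.mkQ_apply, Submodule.liftQ_apply,
      LinearMap.id_apply]
    rw [Submodule.Quotient.eq]
    exact h2 z
  refine ⟨LinearEquiv.ofLinear (Submodule.liftQ (symRel V) f hker)
    ((symRel V).mkQ.comp g0) e1 e2, ?_⟩
  intro g x
  obtain ⟨z, rfl⟩ := Submodule.mkQ_surjective _ x
  rw [LinearEquiv.ofLinear_apply, LinearEquiv.ofLinear_apply]
  have hs : sym2Rep ρ g ((symRel V).mkQ z)
      = (symRel V).mkQ (TensorProduct.map (ρ g) (ρ g) z) := by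
    rfl
  rw [hs]
  simp only [Submodule.mkQ_apply, Submodule.liftQ_apply]
  exact hequiv g z

end Generic

end Sym2IndAux
namespace Sym2IndAux

section Concrete

variable {G : Type*} [Group G]

set_option maxHeartbeats 1000000
set_option synthInstance.maxHeartbeats 400000

lemma sq_val {H : Subgroup G} (κ : H →* ℂˣ) (h : H) :
    (((κ ^ 2) h : ℂˣ) : ℂ) = ((κ h : ℂˣ) : ℂ) * ((κ h : ℂˣ) : ℂ) := by
  rw [pow_two, MonoidHom.mul_apply, Units.val_mul]

lemma mulHom_bas_one {H : Subgroup G} {σ : G} (hσ : σ ∉ H) (κ : H →* ℂˣ) :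
    mulHom H κ (bas H κ 1) (bas H κ 1) = bas H (κ ^ 2) 1 := by
  apply Subtype.ext; funext g
  show basFun H κ 1 g * basFun H κ 1 g = basFun H (κ ^ 2) 1 g
  by_cases hg : g ∈ H
  · rw [basFun_one_of_mem κ hg, basFun_one_of_mem (κ ^ 2) hg, sq_val]
  · rw [basFun_one_of_not_mem κ hg, basFun_one_of_not_mem (κ ^ 2) hg, mul_zero]

lemma mulHom_bas_sigma {H : Subgroup G} {σ : G} (hσ : σ ∉ H) (κ : H →* ℂˣ) :
    mulHom H κ (bas H κ σ) (bas H κ σ) = bas H (κ ^ 2) σ := by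
  apply Subtype.ext; funext g
  show basFun H κ σ g * basFun H κ σ g = basFun H (κ ^ 2) σ g
  by_cases hg : g * σ⁻¹ ∈ H
  · rw [basFun_sigma_of_mem κ hg, basFun_sigma_of_mem (κ ^ 2) hg, sq_val]
  · rw [basFun_sigma_of_not_mem κ hg, basFun_sigma_of_not_mem (κ ^ 2) hg, mul_zero]

lemma mulHom_bas_mixed {H : Subgroup G} {σ : G} (hσ : σ ∉ H) (κ : H →* ℂˣ) :
    mulHom H κ (bas H κ 1) (bas H κ σ) = 0 := by
  apply Subtype.ext; funext g
  show basFun H κ 1 g * basFun H κ σ g = 0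
  by_cases hg : g ∈ H
  · rw [basFun_sigma_of_not_mem κ (fun hc => hσ (mem_of_mem_coset hg hc)), mul_zero]
  · rw [basFun_one_of_not_mem κ hg, zero_mul]

lemma BHom_bas_one {H : Subgroup G} {σ : G} (hσ : σ ∉ H) (κ : H →* ℂˣ) :
    BHom H κ σ (bas H κ 1) (bas H κ 1) = 0 := by
  show basFun H κ 1 1 * basFun H κ 1 σ + basFun H κ 1 σ * basFun H κ 1 1 = 0
  rw [bas_val_one_sigma κ hσ]; ring

lemma BHom_bas_sigma {H : Subgroup G} {σ : G} (hσ : σ ∉ H) (κ : H →* ℂˣ) :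
    BHom H κ σ (bas H κ σ) (bas H κ σ) = 0 := by
  show basFun H κ σ 1 * basFun H κ σ σ + basFun H κ σ σ * basFun H κ σ 1 = 0
  rw [bas_val_sigma_one κ hσ]; ring

lemma BHom_bas_mixed {H : Subgroup G} {σ : G} (hσ : σ ∉ H) (κ : H →* ℂˣ) :
    BHom H κ σ (bas H κ 1) (bas H κ σ) = 1 := by
  show basFun H κ 1 1 * basFun H κ σ σ + basFun H κ 1 σ * basFun H κ σ 1 = 1
  rw [bas_val_one_one, bas_val_sigma_sigma, bas_val_one_sigma κ hσ, bas_val_sigma_one κ hσ]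
  ring

lemma Phi_comp_Psi0 {H : Subgroup G} (hH : H.index = 2) {σ : G} (hσ : σ ∉ H)
    (κ : H →* ℂˣ) : (Phi H κ σ).comp (Psi0 H κ σ) = LinearMap.id := by
  apply LinearMap.ext
  rintro ⟨F, c⟩
  rw [LinearMap.comp_apply, Psi0_apply, map_add, map_add, map_smul, map_smul, map_smul,
    Phi_tmul, Phi_tmul, Phi_tmul, mulHom_bas_one hσ κ, mulHom_bas_sigma hσ κ,
    mulHom_bas_mixed hσ κ, BHom_bas_one hσ κ, BHom_bas_sigma hσ κ, BHom_bas_mixed hσ κ]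
  simp only [LinearMap.id_apply, Prod.smul_mk, Prod.mk_add_mk, smul_zero, smul_eq_mul,
    mul_one, add_zero, zero_add, Prod.mk.injEq]
  exact ⟨(decomp hH hσ (κ ^ 2) F).symm, by ring⟩

lemma Psi0_retract {H : Subgroup G} (hH : H.index = 2) {σ : G} (hσ : σ ∉ H)
    (κ : H →* ℂˣ) :
    ∀ z : indCarrier H κ ⊗[ℂ] indCarrier H κ,
      Psi0 H κ σ (Phi H κ σ z) - z ∈ symRel (indCarrier H κ) := by
  intro z
  induction z using TensorProduct.induction_on with
  | zero =>
    rw [map_zero, map_zero]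
    simpa using (symRel (indCarrier H κ)).zero_mem
  | tmul f f' =>
    rw [Phi_tmul, Psi0_apply]
    have hs1 : (mulHom H κ f f').1 1 = f.1 1 * f'.1 1 := rfl
    have hs2 : (mulHom H κ f f').1 σ = f.1 σ * f'.1 σ := rfl
    have hs3 : BHom H κ σ f f' = f.1 1 * f'.1 σ + f.1 σ * f'.1 1 := rfl
    rw [hs1, hs2, hs3]
    have hf := decomp hH hσ κ f
    have hf' := decomp hH hσ κ f'
    set a := f.1 1 with ha
    set b := f.1 σ with hb
    set a' := f'.1 1 with ha'
    set b' := f'.1 σ with hb'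
    have key : (a * a') • (bas H κ 1 ⊗ₜ[ℂ] bas H κ 1)
        + (b * b') • (bas H κ σ ⊗ₜ[ℂ] bas H κ σ)
        + (a * b' + b * a') • (bas H κ 1 ⊗ₜ[ℂ] bas H κ σ) - f ⊗ₜ[ℂ] f'
        = (b * a') • (bas H κ 1 ⊗ₜ[ℂ] bas H κ σ - bas H κ σ ⊗ₜ[ℂ] bas H κ 1) := by
      rw [hf, hf']
      simp only [TensorProduct.add_tmul, TensorProduct.tmul_add, TensorProduct.smul_tmul',
        TensorProduct.tmul_smul, smul_smul, smul_sub]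
      simp only [← TensorProduct.smul_tmul', smul_smul]
      module
    rw [key]
    exact Submodule.smul_mem _ _ (Submodule.subset_span ⟨_, _, rfl⟩)
  | add x y hx hy =>
    rw [map_add, map_add]
    have e : Psi0 H κ σ (Phi H κ σ x) + Psi0 H κ σ (Phi H κ σ y) - (x + y)
        = (Psi0 H κ σ (Phi H κ σ x) - x) + (Psi0 H κ σ (Phi H κ σ y) - y) := by abel
    rw [e]
    exact Submodule.add_mem _ hx hy

lemma B_equiv {H : Subgroup G} (hH : H.index = 2) {σ : G} (hσ : σ ∉ H) (κ : H →* ℂˣ)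
    (θ : G →* ℂˣ)
    (hθ1 : ∀ h h' : H, σ * (h : G) * σ⁻¹ = (h' : G) → θ (h : G) = κ h * κ h')
    (hθ2 : ∀ s : H, (s : G) = σ * σ → θ σ = κ s)
    (g : G) (f f' : indCarrier H κ) :
    f.1 (1 * g) * f'.1 (σ * g) + f.1 (σ * g) * f'.1 (1 * g)
      = ((θ g : ℂˣ) : ℂ) * (f.1 1 * f'.1 σ + f.1 σ * f'.1 1) := by
  have sqmem : σ * σ ∈ H := Subgroup.mul_self_mem_of_index_two hH σ
  rw [one_mul]
  by_cases hg : g ∈ H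
  · have h1 : f.1 g = ((κ ⟨g, hg⟩ : ℂˣ) : ℂ) * f.1 1 := by simpa using f.2 ⟨g, hg⟩ 1
    have h1' : f'.1 g = ((κ ⟨g, hg⟩ : ℂˣ) : ℂ) * f'.1 1 := by simpa using f'.2 ⟨g, hg⟩ 1
    have h2 : f.1 (σ * g) = ((κ ⟨σ * g * σ⁻¹, conj_mem hH hg σ⟩ : ℂˣ) : ℂ) * f.1 σ := by
      simpa [show σ * g * σ⁻¹ * σ = σ * g by group] using
        f.2 ⟨σ * g * σ⁻¹, conj_mem hH hg σ⟩ σ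
    have h2' : f'.1 (σ * g) = ((κ ⟨σ * g * σ⁻¹, conj_mem hH hg σ⟩ : ℂˣ) : ℂ) * f'.1 σ := by
      simpa [show σ * g * σ⁻¹ * σ = σ * g by group] using
        f'.2 ⟨σ * g * σ⁻¹, conj_mem hH hg σ⟩ σ
    have hθ : ((θ g : ℂˣ) : ℂ) = ((κ ⟨g, hg⟩ : ℂˣ) : ℂ)
        * ((κ ⟨σ * g * σ⁻¹, conj_mem hH hg σ⟩ : ℂˣ) : ℂ) := by
      rw [hθ1 ⟨g, hg⟩ ⟨σ * g * σ⁻¹, conj_mem hH hg σ⟩ rfl, Units.val_mul]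
    rw [h1, h1', h2, h2', hθ]; ring
  · have hgs : g * σ⁻¹ ∈ H := coset_mem hH hσ hg
    have h1 : f.1 g = ((κ ⟨g * σ⁻¹, hgs⟩ : ℂˣ) : ℂ) * f.1 σ := by
      simpa [show g * σ⁻¹ * σ = g by group] using f.2 ⟨g * σ⁻¹, hgs⟩ σ
    have h1' : f'.1 g = ((κ ⟨g * σ⁻¹, hgs⟩ : ℂˣ) : ℂ) * f'.1 σ := by
      simpa [show g * σ⁻¹ * σ = g by group] using f'.2 ⟨g * σ⁻¹, hgs⟩ σ
    have h2 : f.1 (σ * g) = ((κ ⟨σ * (g * σ⁻¹) * σ⁻¹, conj_mem hH hgs σ⟩ : ℂˣ) : ℂ)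
        * (((κ ⟨σ * σ, sqmem⟩ : ℂˣ) : ℂ) * f.1 1) := by
      have hb' : f.1 (σ * σ) = ((κ ⟨σ * σ, sqmem⟩ : ℂˣ) : ℂ) * f.1 1 := by
        simpa using f.2 ⟨σ * σ, sqmem⟩ 1
      have ha' : f.1 (σ * g)
          = ((κ ⟨σ * (g * σ⁻¹) * σ⁻¹, conj_mem hH hgs σ⟩ : ℂˣ) : ℂ) * f.1 (σ * σ) := by
        simpa [show (σ * (g * σ⁻¹) * σ⁻¹) * (σ * σ) = σ * g by group] using
          f.2 ⟨σ * (g * σ⁻¹) * σ⁻¹, conj_mem hH hgs σ⟩ (σ * σ)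
      rw [ha', hb']
    have h2' : f'.1 (σ * g) = ((κ ⟨σ * (g * σ⁻¹) * σ⁻¹, conj_mem hH hgs σ⟩ : ℂˣ) : ℂ)
        * (((κ ⟨σ * σ, sqmem⟩ : ℂˣ) : ℂ) * f'.1 1) := by
      have hb' : f'.1 (σ * σ) = ((κ ⟨σ * σ, sqmem⟩ : ℂˣ) : ℂ) * f'.1 1 := by
        simpa using f'.2 ⟨σ * σ, sqmem⟩ 1
      have ha' : f'.1 (σ * g)
          = ((κ ⟨σ * (g * σ⁻¹) * σ⁻¹, conj_mem hH hgs σ⟩ : ℂˣ) : ℂ) * f'.1 (σ * σ) := by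
        simpa [show (σ * (g * σ⁻¹) * σ⁻¹) * (σ * σ) = σ * g by group] using
          f'.2 ⟨σ * (g * σ⁻¹) * σ⁻¹, conj_mem hH hgs σ⟩ (σ * σ)
      rw [ha', hb']
    have hθg : ((θ g : ℂˣ) : ℂ) = ((κ ⟨g * σ⁻¹, hgs⟩ : ℂˣ) : ℂ)
        * ((κ ⟨σ * (g * σ⁻¹) * σ⁻¹, conj_mem hH hgs σ⟩ : ℂˣ) : ℂ)
        * ((κ ⟨σ * σ, sqmem⟩ : ℂˣ) : ℂ) := by
      have e : g = (g * σ⁻¹) * σ := by group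
      have hsplit : θ g = θ (g * σ⁻¹) * θ σ := by
        conv_lhs => rw [e]
        exact map_mul θ _ _
      rw [hsplit, hθ1 ⟨g * σ⁻¹, hgs⟩ ⟨σ * (g * σ⁻¹) * σ⁻¹, conj_mem hH hgs σ⟩ rfl,
        hθ2 ⟨σ * σ, sqmem⟩ rfl, Units.val_mul, Units.val_mul]
    rw [h1, h1', h2, h2', hθg]; ring

lemma Phi_equivariant {H : Subgroup G} (hH : H.index = 2) {σ : G} (hσ : σ ∉ H)
    (κ : H →* ℂˣ) (θ : G →* ℂˣ)
    (hθ1 : ∀ h h' : H, σ * (h : G) * σ⁻¹ = (h' : G) → θ (h : G) = κ h * κ h')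
    (hθ2 : ∀ s : H, (s : G) = σ * σ → θ σ = κ s) :
    ∀ (g : G) (z : indCarrier H κ ⊗[ℂ] indCarrier H κ),
      Phi H κ σ (TensorProduct.map (indRep H κ g) (indRep H κ g) z)
        = prodRep (indRep H (κ ^ 2)) (charRep θ) g (Phi H κ σ z) := by
  intro g z
  induction z using TensorProduct.induction_on with
  | zero => simp
  | tmul f f' =>
    have hpair : prodRep (indRep H (κ ^ 2)) (charRep θ) g (mulHom H κ f f', BHom H κ σ f f')
        = (indRep H (κ ^ 2) g (mulHom H κ f f'), ((θ g : ℂˣ) : ℂ) * BHom H κ σ f f') := by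
      show (LinearMap.prodMap _ _) _ = _
      rw [LinearMap.prodMap_apply]
      show (_, ((θ g : ℂˣ) : ℂ) • (LinearMap.id (BHom H κ σ f f'))) = _
      rw [LinearMap.id_apply, smul_eq_mul]
    have hA : mulHom H κ (indRep H κ g f) (indRep H κ g f')
        = indRep H (κ ^ 2) g (mulHom H κ f f') := Subtype.ext rfl
    have hB : BHom H κ σ (indRep H κ g f) (indRep H κ g f')
        = ((θ g : ℂˣ) : ℂ) * BHom H κ σ f f' := by
      show f.1 (1 * g) * f'.1 (σ * g) + f.1 (σ * g) * f'.1 (1 * g)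
        = ((θ g : ℂˣ) : ℂ) * (f.1 1 * f'.1 σ + f.1 σ * f'.1 1)
      exact B_equiv hH hσ κ θ hθ1 hθ2 g f f'
    rw [TensorProduct.map_tmul, Phi_tmul, Phi_tmul, hpair, hA, hB]
  | add x y hx hy =>
    simp only [map_add, hx, hy]

end Concrete

end Sym2IndAux

/-- Let `H ≤ G` have index two, `σ ∈ G \ H`, and `κ : H →* ℂˣ` with
`κ^σ ≠ κ` (hypothesis `hne`).  Then there is a unique character `θ : G →* ℂˣ` with
`θ(x) = κ(x)·κ^σ(x)` for `x ∈ H` and `θ(σ) = κ(σ²)`, and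
`Sym²(Ind_H^G κ) ≅ Ind_H^G (κ²) ⊕ θ` as complex representations of `G`. -/
theorem sym2_ind_decomposition (H : Subgroup G) (hH : H.index = 2)
    (σ : G) (hσ : σ ∉ H) (κ : H →* ℂˣ)
    (hne : ∃ h h' : H, σ * (h : G) * σ⁻¹ = (h' : G) ∧ κ h' ≠ κ h) :
    (∃! θ : G →* ℂˣ,
      (∀ h h' : H, σ * (h : G) * σ⁻¹ = (h' : G) → θ (h : G) = κ h * κ h') ∧
      (∀ s : H, (s : G) = σ * σ → θ σ = κ s)) ∧
    (∀ θ : G →* ℂˣ,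
      ((∀ h h' : H, σ * (h : G) * σ⁻¹ = (h' : G) → θ (h : G) = κ h * κ h') ∧
       (∀ s : H, (s : G) = σ * σ → θ σ = κ s)) →
      RepIso (sym2Rep (indRep H κ)) (prodRep (indRep H (κ ^ 2)) (charRep θ))) := by
  constructor
  · exact ⟨Sym2IndAux.theta hH hσ κ,
      ⟨Sym2IndAux.theta_cond1 hH hσ κ, Sym2IndAux.theta_cond2 hH hσ κ⟩,
      fun θ' h' => Sym2IndAux.theta_unique hH hσ κ θ' (Sym2IndAux.theta hH hσ κ) h'
        ⟨Sym2IndAux.theta_cond1 hH hσ κ, Sym2IndAux.theta_cond2 hH hσ κ⟩⟩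
  · intro θ hθ
    exact Sym2IndAux.sym2RepIso (indRep H κ) (prodRep (indRep H (κ ^ 2)) (charRep θ))
      (Sym2IndAux.Phi H κ σ) (Sym2IndAux.Psi0 H κ σ) (Sym2IndAux.Phi_vanish H κ σ)
      (Sym2IndAux.Phi_comp_Psi0 hH hσ κ) (Sym2IndAux.Psi0_retract hH hσ κ)
      (Sym2IndAux.Phi_equivariant hH hσ κ θ hθ.1 hθ.2)
end

section
/- Let G be a group, H a subgroup of G of index 2, and χ : H → ℂ^× a group homomorphism invariant under conjugation by G, i.e. χ(gxg⁻¹) = χ(x) for all x ∈ H and g ∈ G. Then χ extends to a group homomorphism ψ : G → ℂ^×, and the induced representation decomposes as Ind_H^G(χ) ≅ ψ ⊕ ψε, where ε : G → ℂ^× is the unique nontrivial character of G that is trivial on H. -/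
/-!
Decomposition of the representation induced from a conjugation-invariant character of an
index-two subgroup: `Ind_H^G χ ≅ ψ ⊕ ψε`.

`Ind_H^G χ` is realized on the space of functions `f : G → ℂ` with `f(hg) = χ(h)f(g)`
for `h ∈ H`, with `G` acting by right translation.  One-dimensional representations are
given by characters `G →* ℂˣ` acting on `ℂ` by scalar multiplication.
-/

variable {G : Type*} [Group G]

/-- Let `H ≤ G` have index two and let `χ : H →* ℂˣ` be invariant under
conjugation by `G`.  Then `χ` extends to a character `ψ` of `G`, and
`Ind_H^G χ ≅ ψ ⊕ ψε`, where `ε` is the unique nontrivial character of `G` trivial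
on `H`. -/
theorem ind_invariant_char_decomposition (H : Subgroup G) (hH : H.index = 2)
    (χ : H →* ℂˣ)
    (hinv : ∀ (g : G) (h h' : H), g * (h : G) * g⁻¹ = (h' : G) → χ h' = χ h) :
    ∃ ψ : G →* ℂˣ, (∀ h : H, ψ (h : G) = χ h) ∧
      (∃! ε : G →* ℂˣ, ε ≠ 1 ∧ ∀ h : H, ε (h : G) = 1) ∧
      (∀ ε : G →* ℂˣ, (ε ≠ 1 ∧ ∀ h : H, ε (h : G) = 1) →
        RepIso (indRep H χ) (prodRep (charRep ψ) (charRep (ψ * ε)))) := by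
  classical
  obtain ⟨g₀, hg₀⟩ := Subgroup.index_eq_two_iff.mp hH
  have hg₀H : g₀ ∉ H := by
    rcases hg₀ 1 with ⟨h1, h2⟩ | ⟨h1, h2⟩
    · exact absurd H.one_mem h2
    · simpa using h2
  have hmem : ∀ x : G, x ∉ H → x * g₀⁻¹ ∈ H := by
    intro x hx
    rcases hg₀ (x * g₀⁻¹) with ⟨h1, h2⟩ | ⟨h1, h2⟩
    · rw [inv_mul_cancel_right] at h1; exact absurd h1 hx
    · exact h1
  have hsq : g₀ * g₀ ∈ H := by
    rcases hg₀ g₀ with ⟨h1, h2⟩ | ⟨h1, h2⟩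
    · exact h1
    · exact absurd h1 hg₀H
  -- square root of χ(g₀²)
  obtain ⟨z0, hz0⟩ : ∃ z : ℂ, z * z = (χ ⟨g₀ * g₀, hsq⟩ : ℂ) := by
    obtain ⟨z, hz⟩ := IsAlgClosed.exists_pow_nat_eq ((χ ⟨g₀ * g₀, hsq⟩ : ℂ)) (n := 2) (by norm_num)
    exact ⟨z, by rw [← sq]; exact hz⟩
  have hz0ne : z0 ≠ 0 := by
    intro h; rw [h, zero_mul] at hz0; exact (Units.ne_zero _) hz0.symm
  set z : ℂˣ := Units.mk0 z0 hz0ne with hzdef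
  have hz : z * z = χ ⟨g₀ * g₀, hsq⟩ := Units.ext (by simpa [hzdef] using hz0)
  -- helper facts
  have hconjmem : ∀ y : G, y ∈ H → g₀ * y * g₀⁻¹ ∈ H := by
    intro y hy
    have h1 : g₀ * y ∉ H := by
      intro h
      exact hg₀H (by simpa using mul_mem h (inv_mem hy))
    exact hmem _ h1
  have hconj : ∀ (y : G) (hy : y ∈ H) (hy2 : g₀ * y * g₀⁻¹ ∈ H),
      χ ⟨g₀ * y * g₀⁻¹, hy2⟩ = χ ⟨y, hy⟩ := fun y hy hy2 => hinv g₀ ⟨y, hy⟩ ⟨_, hy2⟩ rfl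
  -- define ψ
  set fψ : G → ℂˣ := fun x =>
    if hx : x ∈ H then χ ⟨x, hx⟩ else χ ⟨x * g₀⁻¹, hmem x hx⟩ * z with hfψdef
  have hfpos : ∀ (x : G) (hx : x ∈ H), fψ x = χ ⟨x, hx⟩ := fun x hx => dif_pos hx
  have hfneg : ∀ (x : G) (hx : x ∉ H), fψ x = χ ⟨x * g₀⁻¹, hmem x hx⟩ * z :=
    fun x hx => dif_neg hx
  have hfmul : ∀ x y : G, fψ (x * y) = fψ x * fψ y := by
    intro x y
    by_cases hx : x ∈ H <;> by_cases hy : y ∈ H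
    · have hxy : x * y ∈ H := mul_mem hx hy
      rw [hfpos _ hxy, hfpos _ hx, hfpos _ hy, ← map_mul]
      exact congrArg χ rfl
    · have hxy : x * y ∉ H := fun h => hy (by simpa using mul_mem (inv_mem hx) h)
      rw [hfneg _ hxy, hfpos _ hx, hfneg _ hy, ← mul_assoc, ← map_mul]
      congr 1
      exact congrArg χ (Subtype.ext (by push_cast; group))
    · have hxy : x * y ∉ H := fun h => hx (by simpa using mul_mem h (inv_mem hy))
      rw [hfneg _ hxy, hfneg _ hx, hfpos _ hy]
      have key : (⟨x * y * g₀⁻¹, hmem _ hxy⟩ : H)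
          = ⟨x * g₀⁻¹, hmem _ hx⟩ * ⟨g₀ * y * g₀⁻¹, hconjmem y hy⟩ :=
        Subtype.ext (by push_cast; group)
      rw [key, map_mul, hconj y hy]
      exact mul_right_comm _ _ _
    · have hxy : x * y ∈ H := by
        have key : x * y = (x * g₀⁻¹) * (g₀ * (y * g₀⁻¹) * g₀⁻¹) * (g₀ * g₀) := by group
        rw [key]
        exact mul_mem (mul_mem (hmem _ hx) (hconjmem _ (hmem _ hy))) hsq
      rw [hfpos _ hxy, hfneg _ hx, hfneg _ hy]
      have key : (⟨x * y, hxy⟩ : H)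
          = ⟨x * g₀⁻¹, hmem _ hx⟩ * ⟨g₀ * (y * g₀⁻¹) * g₀⁻¹, hconjmem _ (hmem _ hy)⟩
            * ⟨g₀ * g₀, hsq⟩ :=
        Subtype.ext (by push_cast; group)
      rw [key, map_mul, map_mul, hconj _ (hmem _ hy), ← hz]
      exact mul_mul_mul_comm _ _ _ _
  have hfone : fψ 1 = 1 := by
    rw [hfpos 1 H.one_mem]
    exact map_one χ
  obtain ⟨ψ, hψ⟩ : ∃ ψ : G →* ℂˣ, ∀ x, ψ x = fψ x := ⟨⟨⟨fψ, hfone⟩, hfmul⟩, fun _ => rfl⟩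
  have hψH : ∀ (x : G) (hx : x ∈ H), ψ x = χ ⟨x, hx⟩ := fun x hx => (hψ x).trans (hfpos x hx)
  -- the sign character ε₀
  obtain ⟨ε₀, hε₀⟩ : ∃ ε : G →* ℂˣ, ∀ x, ε x = if x ∈ H then 1 else -1 := by
    refine ⟨⟨⟨fun x => if x ∈ H then 1 else -1, by simp [H.one_mem]⟩, ?_⟩, fun _ => rfl⟩
    intro x y
    by_cases hx : x ∈ H <;> by_cases hy : y ∈ H
    · simp [hx, hy, mul_mem hx hy]
    · have hxy : x * y ∉ H := fun h => hy (by simpa using mul_mem (inv_mem hx) h)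
      simp [hx, hy, hxy]
    · have hxy : x * y ∉ H := fun h => hx (by simpa using mul_mem h (inv_mem hy))
      simp [hx, hy, hxy]
    · have hxy : x * y ∈ H := by
        have key : x * y = (x * g₀⁻¹) * (g₀ * (y * g₀⁻¹) * g₀⁻¹) * (g₀ * g₀) := by group
        rw [key]; exact mul_mem (mul_mem (hmem _ hx) (hconjmem _ (hmem _ hy))) hsq
      simp [hx, hy, hxy]
  -- any nontrivial character trivial on H equals ε₀ pointwise
  have hcharval : ∀ (ε' : G →* ℂˣ), ε' ≠ 1 → (∀ h : H, ε' (h : G) = 1) → ∀ x : G,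
      ε' x = if x ∈ H then 1 else -1 := by
    intro ε' hne ht x
    have hg2 : ε' g₀ * ε' g₀ = 1 := by
      rw [← map_mul]; exact ht ⟨g₀ * g₀, hsq⟩
    have hval : ∀ (y : G), y ∉ H → ε' y = ε' g₀ := by
      intro y hy
      have h1 : ε' y = ε' (y * g₀⁻¹) * ε' g₀ := by
        rw [← map_mul, inv_mul_cancel_right]
      rw [h1, ht ⟨y * g₀⁻¹, hmem y hy⟩, one_mul]
    have hg : ε' g₀ = -1 := by
      have h2 : (ε' g₀ : ℂ) = 1 ∨ (ε' g₀ : ℂ) = -1 := by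
        apply mul_self_eq_one_iff.mp
        rw [← Units.val_mul, hg2, Units.val_one]
      rcases h2 with h | h
      · exfalso; apply hne
        ext y
        by_cases hy : y ∈ H
        · simpa using ht ⟨y, hy⟩
        · rw [hval y hy]
          simpa using Units.ext (α := ℂ) (by simpa using h)
      · exact Units.ext (by simpa using h)
    by_cases hx : x ∈ H
    · rw [if_pos hx]; exact ht ⟨x, hx⟩
    · rw [if_neg hx, hval x hx, hg]
  have hε₀ne : ε₀ ≠ 1 := by
    intro h
    have h1 := hε₀ g₀
    rw [h, if_neg hg₀H] at h1
    have h2 : (1 : ℂˣ) = -1 := by simpa using h1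
    have h3 := congrArg Units.val h2
    norm_num at h3
  have hε₀triv : ∀ h : H, ε₀ (h : G) = 1 := fun h => by rw [hε₀]; exact if_pos h.2
  refine ⟨ψ, fun h => hψH _ h.2,
    ⟨ε₀, ⟨hε₀ne, hε₀triv⟩,
      fun ε' h => MonoidHom.ext fun x => (hcharval ε' h.1 h.2 x).trans (hε₀ x).symm⟩, ?_⟩
  rintro ε ⟨hne, ht⟩
  -- values of ε
  have hεH : ∀ (x : G), x ∈ H → (ε x : ℂ) = 1 := fun x hx => by
    simpa using congrArg Units.val (ht ⟨x, hx⟩)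
  have hεN : ∀ (x : G), x ∉ H → (ε x : ℂ) = -1 := fun x hx => by
    rw [hcharval ε hne ht x, if_neg hx]; simp
  have hψg₀ne : (ψ g₀ : ℂ) ≠ 0 := Units.ne_zero _
  set c : ℂ := ((ψ g₀ : ℂ))⁻¹ with hc
  -- the intertwining maps
  set Lf : ℂ × ℂ → G → ℂ :=
    fun p x => p.1 * (ψ x : ℂ) + p.2 * ((ψ x : ℂ) * (ε x : ℂ)) with hLf
  have Lmem : ∀ p : ℂ × ℂ, Lf p ∈ indCarrier H χ := by
    intro p h g
    have h1 : (ψ ((h : G) * g) : ℂ) = (χ h : ℂ) * (ψ g : ℂ) := by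
      rw [map_mul, Units.val_mul, hψH _ h.2]
    have h2 : (ε ((h : G) * g) : ℂ) = (ε g : ℂ) := by
      rw [map_mul, Units.val_mul, hεH _ h.2, one_mul]
    simp only [hLf, h1, h2]
    ring
  set Lfun : ℂ × ℂ → indCarrier H χ := fun p => ⟨Lf p, Lmem p⟩ with hLfun
  set M : indCarrier H χ → ℂ × ℂ :=
    fun f => (((f : G → ℂ) 1 + (f : G → ℂ) g₀ * c) / 2,
      ((f : G → ℂ) 1 - (f : G → ℂ) g₀ * c) / 2) with hM
  -- values of ψ and f
  have hψx : ∀ (x : G) (hx : x ∉ H), (ψ x : ℂ) = (χ ⟨x * g₀⁻¹, hmem x hx⟩ : ℂ) * (ψ g₀ : ℂ) := by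
    intro x hx
    rw [← hψH _ (hmem x hx), ← Units.val_mul, ← map_mul, inv_mul_cancel_right]
  have hfx : ∀ (f : indCarrier H χ) (x : G) (hx : x ∈ H),
      (f : G → ℂ) x = (χ ⟨x, hx⟩ : ℂ) * (f : G → ℂ) 1 := by
    intro f x hx
    simpa using f.2 ⟨x, hx⟩ 1
  have hfx' : ∀ (f : indCarrier H χ) (x : G) (hx : x ∉ H),
      (f : G → ℂ) x = (χ ⟨x * g₀⁻¹, hmem x hx⟩ : ℂ) * (f : G → ℂ) g₀ := by
    intro f x hx
    have := f.2 ⟨x * g₀⁻¹, hmem x hx⟩ g₀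
    rwa [inv_mul_cancel_right] at this
  have hψ1 : (ψ 1 : ℂ) = 1 := by rw [map_one, Units.val_one]
  have hε1 : (ε 1 : ℂ) = 1 := by rw [map_one, Units.val_one]
  have hεg₀ : (ε g₀ : ℂ) = -1 := hεN g₀ hg₀H
  have hleft : ∀ f, Lfun (M f) = f := by
    intro f
    apply Subtype.ext
    funext x
    show Lf (M f) x = (f : G → ℂ) x
    by_cases hx : x ∈ H
    · rw [hLf]
      simp only [hM]
      rw [hfx f x hx, hψH _ hx, hεH _ hx]
      ring
    · rw [hLf]
      simp only [hM]
      rw [hfx' f x hx, hψx x hx, hεN _ hx, hc]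
      field_simp
      ring
  have hright : ∀ p, M (Lfun p) = p := by
    intro p
    have h1 : Lf p 1 = p.1 + p.2 := by
      simp only [hLf, map_one, Units.val_one]; ring
    have h2 : Lf p g₀ = (p.1 - p.2) * (ψ g₀ : ℂ) := by
      simp only [hLf, hεg₀]; ring
    have hcc : (ψ g₀ : ℂ) * c = 1 := mul_inv_cancel₀ hψg₀ne
    show (((Lf p 1) + (Lf p g₀) * c) / 2, ((Lf p 1) - (Lf p g₀) * c) / 2) = p
    rw [h1, h2]
    have h3 : (p.1 - p.2) * (ψ g₀ : ℂ) * c = p.1 - p.2 := by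
      rw [mul_assoc, hcc, mul_one]
    rw [h3]
    ext <;> (show _ = _; ring)
  -- M is linear
  have hMadd : ∀ f g : indCarrier H χ, M (f + g) = M f + M g := by
    intro f g
    simp only [hM, Submodule.coe_add, Pi.add_apply, Prod.mk_add_mk, Prod.mk.injEq]
    constructor <;> ring
  have hMsmul : ∀ (a : ℂ) (f : indCarrier H χ), M (a • f) = a • M f := by
    intro a f
    simp only [hM, SetLike.val_smul, Pi.smul_apply, smul_eq_mul, Prod.smul_mk, Prod.mk.injEq]
    constructor <;> ring
  -- equivariance of Lfun
  have hLequi : ∀ (g : G) (p : ℂ × ℂ),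
      (indRep H χ) g (Lfun p) = Lfun ((prodRep (charRep ψ) (charRep (ψ * ε))) g p) := by
    intro g p
    apply Subtype.ext
    funext x
    show Lf p (x * g) = Lf ((prodRep (charRep ψ) (charRep (ψ * ε))) g p) x
    have hσ : (prodRep (charRep ψ) (charRep (ψ * ε))) g p
        = ((ψ g : ℂ) * p.1, ((ψ g : ℂ) * (ε g : ℂ)) * p.2) := by
      simp [prodRep, charRep, Units.smul_def, Units.val_mul]
    rw [hσ, hLf]
    simp only [map_mul, Units.val_mul]
    ring
  refine ⟨⟨⟨⟨M, hMadd⟩, hMsmul⟩, Lfun, hleft, hright⟩, ?_⟩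
  intro g f
  have h1 := hLequi g (M f)
  rw [hleft f] at h1
  show M ((indRep H χ) g f) = (prodRep (charRep ψ) (charRep (ψ * ε))) g (M f)
  rw [h1, hright]
end

section
/- Let K/ℚ₂ be a ramified quadratic field extension, let δ be the 2-adic valuation of the discriminant of K/ℚ₂, and let ω : ℚ₂^× → ℂ^× be a character of order 2 with kernel N_{K/ℚ₂}(K^×) and conductor a(ω) = δ. Then for every character φ of ℚ₂^× with a(φ) ≥ δ + 1, one has a(φ ∘ N_{K/ℚ₂}) = 2a(φ) − δ; in particular a(φ ∘ N_{K/ℚ₂}) has the same parity as δ. -/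
/-!
For a ramified quadratic extension `K/ℚ₂`: with `δ` the `2`-adic valuation of the
discriminant and `ω` the quadratic character with kernel the norm group and `a(ω) = δ`,
one has `a(φ ∘ N_{K/ℚ₂}) = 2·a(φ) − δ` for every character `φ` with `a(φ) ≥ δ + 1`.

Since `K/ℚ₂` is ramified (residue degree `1`), the `2`-adic valuation `δ` of the
discriminant equals the exponent of the different ideal `𝔡_{K/ℚ₂} = 𝔭_K^δ`, which is
characterized by the inverse different: `{x : Tr_{K/ℚ₂}(x 𝒪_K) ⊆ ℤ₂} = 𝔭_K^{-δ}`
(hypothesis `hδ` below).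
-/

/-- The normalized discrete valuation on a finite extension `K` of `ℚ_p`, together with
the ramification index `e`.  (Such data exists and is unique for every finite extension.) -/
structure PadicValData (p : ℕ) [Fact p.Prime] (K : Type*) [Field K] [Algebra ℚ_[p] K] where
  /-- the normalized valuation (with junk value at `0`) -/
  v : K → ℤ
  /-- the ramification index of `K/ℚ_p` -/
  e : ℕ
  v_mul : ∀ x y : K, x ≠ 0 → y ≠ 0 → v (x * y) = v x + v y
  v_add : ∀ x y : K, x ≠ 0 → y ≠ 0 → x + y ≠ 0 → min (v x) (v y) ≤ v (x + y)
  v_surj : ∀ n : ℤ, ∃ x : K, x ≠ 0 ∧ v x = n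
  v_compat : ∀ x : ℚ_[p], x ≠ 0 → v (algebraMap ℚ_[p] K x) = (e : ℤ) * x.valuation

/-- `χ` (a character of `ℚ_p^×`) is trivial on the unit subgroup `U_p^i`. -/
def IsTrivialOnQ (p : ℕ) [Fact p.Prime] (χ : (ℚ_[p])ˣ →* ℂˣ) (i : ℕ) : Prop :=
  ∀ u : (ℚ_[p])ˣ, ‖(u : ℚ_[p])‖ = 1 → ‖(u : ℚ_[p]) - 1‖ ≤ (p : ℝ) ^ (-(i : ℤ)) → χ u = 1

/-- The conductor `a(χ)` of a character of `ℚ_p^×`. -/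
noncomputable def condQ (p : ℕ) [Fact p.Prime] (χ : (ℚ_[p])ˣ →* ℂˣ) : ℕ :=
  sInf {i | IsTrivialOnQ p χ i}

/-- `κ` (a character of `K^×`) is trivial on the higher unit group `U_K^i`. -/
def IsTrivialOnK {p : ℕ} [Fact p.Prime] {K : Type*} [Field K] [Algebra ℚ_[p] K]
    (D : PadicValData p K) (κ : Kˣ →* ℂˣ) (i : ℕ) : Prop :=
  ∀ u : Kˣ, D.v u = 0 → ((u : K) - 1 = 0 ∨ (i : ℤ) ≤ D.v ((u : K) - 1)) → κ u = 1

/-- The conductor `a(κ)` of a character of `K^×`. -/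
noncomputable def condK {p : ℕ} [Fact p.Prime] {K : Type*} [Field K] [Algebra ℚ_[p] K]
    (D : PadicValData p K) (κ : Kˣ →* ℂˣ) : ℕ :=
  sInf {i | IsTrivialOnK D κ i}

/-!
Auxiliary lemmas.
-/

section Aux

lemma fin_two_CH {R : Type*} [CommRing R] (M : Matrix (Fin 2) (Fin 2) R) :
    M * M - M.trace • M + M.det • (1 : Matrix (Fin 2) (Fin 2) R) = 0 := by
  ext i j
  fin_cases i <;> fin_cases j <;>
    simp [Matrix.mul_apply, Fin.sum_univ_two, Matrix.det_fin_two, Matrix.trace_fin_two,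
      Matrix.one_apply] <;> ring

variable {K : Type*} [Field K] [Algebra ℚ_[2] K]

lemma key_identity (hquad : Module.finrank ℚ_[2] K = 2) (z : K) :
    z * z - algebraMap ℚ_[2] K (Algebra.trace ℚ_[2] K z) * z
      + algebraMap ℚ_[2] K (Algebra.norm ℚ_[2] z) = 0 := by
  have : FiniteDimensional ℚ_[2] K := FiniteDimensional.of_finrank_eq_succ hquad
  let b : Module.Basis (Fin 2) ℚ_[2] K := Module.finBasisOfFinrankEq ℚ_[2] K hquad
  apply Algebra.leftMulMatrix_injective b
  rw [map_add, map_sub, map_mul, map_mul, map_zero, AlgHom.commutes, AlgHom.commutes,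
    Algebra.trace_eq_matrix_trace b, Algebra.norm_eq_matrix_det b,
    Algebra.algebraMap_eq_smul_one, Algebra.algebraMap_eq_smul_one, smul_mul_assoc, one_mul]
  exact fin_two_CH _

lemma norm_factor (hquad : Module.finrank ℚ_[2] K = 2) (z : K) :
    algebraMap ℚ_[2] K (Algebra.norm ℚ_[2] z)
      = z * (algebraMap ℚ_[2] K (Algebra.trace ℚ_[2] K z) - z) := by
  have h := key_identity hquad z
  linear_combination h

lemma trace_one' (hquad : Module.finrank ℚ_[2] K = 2) :
    Algebra.trace ℚ_[2] K 1 = 2 := by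
  have : FiniteDimensional ℚ_[2] K := FiniteDimensional.of_finrank_eq_succ hquad
  have h : (1 : K) = algebraMap ℚ_[2] K 1 := by simp
  rw [h, Algebra.trace_algebraMap, hquad]
  norm_num

lemma norm_one_add (hquad : Module.finrank ℚ_[2] K = 2) (x : K) :
    Algebra.norm ℚ_[2] (1 + x)
      = 1 + Algebra.trace ℚ_[2] K x + Algebra.norm ℚ_[2] x := by
  have : FiniteDimensional ℚ_[2] K := FiniteDimensional.of_finrank_eq_succ hquad
  apply (algebraMap ℚ_[2] K).injective
  have h1 := norm_factor hquad (1 + x)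
  have h2 := norm_factor hquad x
  have htr : Algebra.trace ℚ_[2] K (1 + x) = 2 + Algebra.trace ℚ_[2] K x := by
    rw [map_add, trace_one' hquad]
  rw [htr] at h1
  simp only [map_add, map_one, map_ofNat] at h1 h2 ⊢
  linear_combination h1 - h2

end Aux

section Val

lemma two_zpow_valuation (k : ℤ) : ((2 : ℚ_[2]) ^ k).valuation = k := by
  have h2 : ((2 : ℕ) : ℚ_[2]) = (2 : ℚ_[2]) := by norm_num
  have hne : ((2 : ℚ_[2]) ^ k) ≠ 0 := zpow_ne_zero _ two_ne_zero
  have hnorm : ‖(2 : ℚ_[2]) ^ k‖ = ((2:ℕ) : ℝ) ^ (-k) := by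
    rw [← h2, Padic.norm_p_zpow]
  rw [Padic.norm_eq_zpow_neg_valuation hne] at hnorm
  have := zpow_right_injective₀ (a := ((2:ℕ):ℝ)) (by norm_num) (by norm_num) hnorm
  omega

lemma padic_norm_le_iff {c : ℚ_[2]} (hc : c ≠ 0) (k : ℤ) :
    ‖c‖ ≤ ((2:ℕ) : ℝ) ^ (-k) ↔ k ≤ c.valuation := by
  rw [Padic.norm_eq_zpow_neg_valuation hc, zpow_le_zpow_iff_right₀ (by norm_num : (1:ℝ) < ((2:ℕ):ℝ))]
  omega

variable {K : Type*} [Field K] [Algebra ℚ_[2] K] (D : PadicValData 2 K)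

lemma v_one : D.v 1 = 0 := by
  have := D.v_mul 1 1 one_ne_zero one_ne_zero
  rw [mul_one] at this; omega

lemma v_neg_one : D.v (-1) = 0 := by
  have := D.v_mul (-1) (-1) (by norm_num) (by norm_num)
  rw [neg_mul_neg, one_mul, v_one D] at this; omega

lemma v_neg {x : K} (hx : x ≠ 0) : D.v (-x) = D.v x := by
  have := D.v_mul (-1) x (by norm_num) hx
  rw [neg_one_mul, v_neg_one D] at this; omega

lemma v_inv {x : K} (hx : x ≠ 0) : D.v x⁻¹ = - D.v x := by
  have := D.v_mul x x⁻¹ hx (inv_ne_zero hx)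
  rw [mul_inv_cancel₀ hx, v_one D] at this; omega

lemma v_strict {a b : K} (ha : a ≠ 0) (hb : b ≠ 0) (h : D.v a < D.v b) :
    a + b ≠ 0 ∧ D.v (a + b) = D.v a := by
  have hab : a + b ≠ 0 := by
    intro h0
    have hba : b = -a := by linear_combination h0
    rw [hba, v_neg D ha] at h; omega
  refine ⟨hab, ?_⟩
  have h1 := D.v_add a b ha hb hab
  have h2 := D.v_add (a + b) (-b) hab (neg_ne_zero.mpr hb) (by rwa [add_neg_cancel_right])
  rw [add_neg_cancel_right, v_neg D hb] at h2
  rw [min_eq_left h.le] at h1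
  rcases min_le_iff.mp h2 with hc | hc
  · omega
  · omega

lemma v_algebraMap (hram : D.e = 2) {c : ℚ_[2]} (hc : c ≠ 0) :
    D.v (algebraMap ℚ_[2] K c) = 2 * c.valuation := by
  have := D.v_compat c hc
  rw [hram] at this; exact_mod_cast this

end Val

section Trace

variable {K : Type*} [Field K] [Algebra ℚ_[2] K] (D : PadicValData 2 K)

lemma trace_le (hram : D.e = 2) {δ : ℕ}
    (hδ : ∀ x : K, (∀ y : K, (y = 0 ∨ 0 ≤ D.v y) →
        ‖Algebra.trace ℚ_[2] K (x * y)‖ ≤ 1) ↔ (x = 0 ∨ -(δ : ℤ) ≤ D.v x))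
    (k : ℤ) {x : K} (hx : x ≠ 0) (hv : 2 * k ≤ D.v x + δ) :
    ‖Algebra.trace ℚ_[2] K x‖ ≤ ((2:ℕ) : ℝ) ^ (-k) := by
  set c : ℚ_[2] := (2 : ℚ_[2]) ^ (-k) with hc
  have hcne : c ≠ 0 := zpow_ne_zero _ two_ne_zero
  have hcx : algebraMap ℚ_[2] K c ≠ 0 := by
    simp [map_eq_zero, hcne]
  have hvx' : D.v (algebraMap ℚ_[2] K c * x) = -2 * k + D.v x := by
    rw [D.v_mul _ _ hcx hx, v_algebraMap D hram hcne, two_zpow_valuation]; ring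
  have h1 : ‖Algebra.trace ℚ_[2] K (algebraMap ℚ_[2] K c * x * 1)‖ ≤ 1 := by
    refine ((hδ (algebraMap ℚ_[2] K c * x)).mpr ?_) 1 (Or.inr (le_of_eq (v_one D).symm))
    refine Or.inr ?_
    rw [hvx']; omega
  rw [mul_one, ← Algebra.smul_def, map_smul, smul_eq_mul] at h1
  rcases eq_or_ne (Algebra.trace ℚ_[2] K x) 0 with h0 | h0
  · rw [h0, norm_zero]; positivity
  · rw [padic_norm_le_iff h0]
    have hmul : c * Algebra.trace ℚ_[2] K x ≠ 0 := mul_ne_zero hcne h0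
    have hle : ‖c * Algebra.trace ℚ_[2] K x‖ ≤ ((2:ℕ):ℝ) ^ (-(0:ℤ)) := by
      simpa using h1
    rw [padic_norm_le_iff hmul, Padic.valuation_mul hcne h0, hc,
      two_zpow_valuation] at hle
    omega

lemma trace_sharp (hram : D.e = 2) {δ : ℕ}
    (hδ : ∀ x : K, (∀ y : K, (y = 0 ∨ 0 ≤ D.v y) →
        ‖Algebra.trace ℚ_[2] K (x * y)‖ ≤ 1) ↔ (x = 0 ∨ -(δ : ℤ) ≤ D.v x))
    (n : ℤ) :
    ∃ x : K, x ≠ 0 ∧ 2 * n - 1 - δ ≤ D.v x ∧ Algebra.trace ℚ_[2] K x ≠ 0 ∧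
      (Algebra.trace ℚ_[2] K x).valuation = n - 1 := by
  obtain ⟨x₀, hx₀, hvx₀⟩ := D.v_surj (2 * n - 1 - δ)
  set c : ℚ_[2] := (2 : ℚ_[2]) ^ (-n) with hc
  have hcne : c ≠ 0 := zpow_ne_zero _ two_ne_zero
  have hcx : algebraMap ℚ_[2] K c ≠ 0 := by simp [map_eq_zero, hcne]
  set w : K := algebraMap ℚ_[2] K c * x₀ with hw
  have hwne : w ≠ 0 := mul_ne_zero hcx hx₀
  have hvw : D.v w = -1 - δ := by
    rw [hw, D.v_mul _ _ hcx hx₀, v_algebraMap D hram hcne, two_zpow_valuation, hvx₀]; ring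
  have hnot : ¬ (∀ y : K, (y = 0 ∨ 0 ≤ D.v y) → ‖Algebra.trace ℚ_[2] K (w * y)‖ ≤ 1) := by
    rw [hδ w]
    push_neg
    constructor
    · exact hwne
    · rw [hvw]; omega
  push_neg at hnot
  obtain ⟨y, hy0, hygt⟩ := hnot
  have hyne : y ≠ 0 := by
    rintro rfl
    rw [mul_zero, map_zero, norm_zero] at hygt; linarith
  have hvy : 0 ≤ D.v y := hy0.resolve_left hyne
  refine ⟨x₀ * y, mul_ne_zero hx₀ hyne, ?_, ?_, ?_⟩
  · rw [D.v_mul _ _ hx₀ hyne, hvx₀]; omega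
  · intro h0
    rw [hw, mul_assoc, ← Algebra.smul_def, map_smul, smul_eq_mul, h0, mul_zero,
      norm_zero] at hygt
    linarith
  all_goals {
    have htr : Algebra.trace ℚ_[2] K (w * y) = c * Algebra.trace ℚ_[2] K (x₀ * y) := by
      rw [hw, mul_assoc, ← Algebra.smul_def, map_smul, smul_eq_mul]
    have h0 : Algebra.trace ℚ_[2] K (x₀ * y) ≠ 0 := by
      intro h0
      rw [htr, h0, mul_zero, norm_zero] at hygt; linarith
    have hle : ‖Algebra.trace ℚ_[2] K (x₀ * y)‖ ≤ ((2:ℕ):ℝ) ^ (-(n-1)) := by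
      refine trace_le D hram hδ (n-1) (mul_ne_zero hx₀ hyne) ?_
      rw [D.v_mul _ _ hx₀ hyne, hvx₀]; omega
    rw [padic_norm_le_iff h0] at hle
    have hgt : ¬ (0 : ℤ) ≤ (c * Algebra.trace ℚ_[2] K (x₀ * y)).valuation := by
      rw [← padic_norm_le_iff (mul_ne_zero hcne h0)]
      push_neg
      rw [← htr]
      simpa using hygt
    rw [Padic.valuation_mul hcne h0, hc, two_zpow_valuation] at hgt
    omega }

end Trace

section NormLemmas

variable {K : Type*} [Field K] [Algebra ℚ_[2] K] (D : PadicValData 2 K)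

lemma two_valuation : (2 : ℚ_[2]).valuation = 1 := by
  have h2 : ((2 : ℕ) : ℚ_[2]) = (2 : ℚ_[2]) := by norm_num
  rw [← h2, Padic.valuation_p]

lemma delta_pos (hquad : Module.finrank ℚ_[2] K = 2) (hram : D.e = 2) {δ : ℕ}
    (hδ : ∀ x : K, (∀ y : K, (y = 0 ∨ 0 ≤ D.v y) →
        ‖Algebra.trace ℚ_[2] K (x * y)‖ ≤ 1) ↔ (x = 0 ∨ -(δ : ℤ) ≤ D.v x)) :
    1 ≤ δ := by
  have : FiniteDimensional ℚ_[2] K := FiniteDimensional.of_finrank_eq_succ hquad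
  by_contra hcon
  have hδ0 : δ = 0 := by omega
  subst hδ0
  obtain ⟨π, hπ, hvπ⟩ := D.v_surj 1
  have hπi : π⁻¹ ≠ 0 := inv_ne_zero hπ
  have hvπi : D.v π⁻¹ = -1 := by rw [v_inv D hπ, hvπ]
  have hnot : ¬ (∀ y : K, (y = 0 ∨ 0 ≤ D.v y) → ‖Algebra.trace ℚ_[2] K (π⁻¹ * y)‖ ≤ 1) := by
    rw [hδ π⁻¹]; push_neg
    exact ⟨hπi, by rw [hvπi]; omega⟩
  push_neg at hnot
  obtain ⟨y, hy0, hygt⟩ := hnot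
  have hyne : y ≠ 0 := by
    rintro rfl; rw [mul_zero, map_zero, norm_zero] at hygt; linarith
  have hvy : 0 ≤ D.v y := hy0.resolve_left hyne
  set z : K := π⁻¹ * y with hz
  have hzne : z ≠ 0 := mul_ne_zero hπi hyne
  have hvz : -1 ≤ D.v z := by rw [hz, D.v_mul _ _ hπi hyne, hvπi]; omega
  have hvz1 : D.v z = -1 := by
    rcases lt_or_eq_of_le hvz with h | h
    · exfalso
      have := (hδ z).mpr (Or.inr (by omega)) 1 (Or.inr (le_of_eq (v_one D).symm))
      rw [mul_one] at this; linarith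
    · omega
  have htne : Algebra.trace ℚ_[2] K z ≠ 0 := by
    intro h0; rw [h0, norm_zero] at hygt; linarith
  set t : ℚ_[2] := Algebra.trace ℚ_[2] K z with ht
  have h2z : ‖(2 : ℚ_[2]) * t‖ ≤ 1 := by
    have h2K : algebraMap ℚ_[2] K 2 ≠ 0 := by simp
    have hv2z : D.v (algebraMap ℚ_[2] K 2 * z) = 1 := by
      rw [D.v_mul _ _ h2K hzne, v_algebraMap D hram two_ne_zero, two_valuation, hvz1]; ring
    have := (hδ (algebraMap ℚ_[2] K 2 * z)).mpr (Or.inr (by rw [hv2z]; omega)) 1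
      (Or.inr (le_of_eq (v_one D).symm))
    rw [mul_one, ← Algebra.smul_def, map_smul, smul_eq_mul] at this
    exact this
  have hvt : t.valuation = -1 := by
    have hle : -1 ≤ t.valuation := by
      rw [← padic_norm_le_iff htne]
      have h2t : (2:ℚ_[2]) * t ≠ 0 := mul_ne_zero two_ne_zero htne
      have : ‖(2:ℚ_[2]) * t‖ = 2⁻¹ * ‖t‖ := by
        rw [norm_mul]
        congr 1
        have h2 : ((2 : ℕ) : ℚ_[2]) = (2 : ℚ_[2]) := by norm_num
        rw [← h2, Padic.norm_p]; norm_num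
      rw [this] at h2z
      have : ‖t‖ ≤ 2 := by linarith
      simpa using this
    have hge : ¬ (0 : ℤ) ≤ t.valuation := by
      rw [← padic_norm_le_iff htne]
      push_neg
      simpa using hygt
    omega
  -- now derive the contradiction via the norm
  have hNz : algebraMap ℚ_[2] K (Algebra.norm ℚ_[2] z)
      = z * (algebraMap ℚ_[2] K t - z) := norm_factor hquad z
  have htK : algebraMap ℚ_[2] K t ≠ 0 := by simp [map_eq_zero, htne]
  have hvtK : D.v (algebraMap ℚ_[2] K t) = -2 := by
    rw [v_algebraMap D hram htne, hvt]; ring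
  have hstrict := v_strict D (a := algebraMap ℚ_[2] K t) (b := -z) htK (neg_ne_zero.mpr hzne)
    (by rw [hvtK, v_neg D hzne, hvz1]; omega)
  rw [← sub_eq_add_neg] at hstrict
  obtain ⟨hz'ne, hvz'⟩ := hstrict
  have hNne : Algebra.norm ℚ_[2] z ≠ 0 := Algebra.norm_ne_zero_iff.mpr hzne
  have hNK : algebraMap ℚ_[2] K (Algebra.norm ℚ_[2] z) ≠ 0 := by simp [map_eq_zero, hNne]
  have hveq : D.v (algebraMap ℚ_[2] K (Algebra.norm ℚ_[2] z)) = -3 := by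
    rw [hNz, D.v_mul _ _ hzne hz'ne, hvz1, hvz', hvtK]; ring
  rw [v_algebraMap D hram hNne] at hveq
  omega

lemma norm_val_ge (hquad : Module.finrank ℚ_[2] K = 2) (hram : D.e = 2) {δ : ℕ}
    (hδ : ∀ x : K, (∀ y : K, (y = 0 ∨ 0 ≤ D.v y) →
        ‖Algebra.trace ℚ_[2] K (x * y)‖ ≤ 1) ↔ (x = 0 ∨ -(δ : ℤ) ≤ D.v x))
    {z : K} (hz : z ≠ 0) : D.v z ≤ (Algebra.norm ℚ_[2] z : ℚ_[2]).valuation := by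
  have : FiniteDimensional ℚ_[2] K := FiniteDimensional.of_finrank_eq_succ hquad
  have hδ1 : 1 ≤ δ := delta_pos D hquad hram hδ
  have hNne : Algebra.norm ℚ_[2] z ≠ 0 := Algebra.norm_ne_zero_iff.mpr hz
  have hNK : algebraMap ℚ_[2] K (Algebra.norm ℚ_[2] z) ≠ 0 := by simp [map_eq_zero, hNne]
  have hNz : algebraMap ℚ_[2] K (Algebra.norm ℚ_[2] z)
      = z * (algebraMap ℚ_[2] K (Algebra.trace ℚ_[2] K z) - z) := norm_factor hquad z
  set t : ℚ_[2] := Algebra.trace ℚ_[2] K z with ht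
  have hz'ne : algebraMap ℚ_[2] K t - z ≠ 0 := by
    intro h0; rw [h0, mul_zero] at hNz; exact hNK hNz
  have hvz' : D.v z ≤ D.v (algebraMap ℚ_[2] K t - z) := by
    rcases eq_or_ne t 0 with h0 | h0
    · rw [h0, map_zero, zero_sub, v_neg D hz]
    · have htK : algebraMap ℚ_[2] K t ≠ 0 := by simp [map_eq_zero, h0]
      have hvt : (D.v z + 1) / 2 ≤ t.valuation := by
        rw [← padic_norm_le_iff h0]
        exact trace_le D hram hδ _ hz (by omega)
      have hvtK : D.v z ≤ D.v (algebraMap ℚ_[2] K t) := by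
        rw [v_algebraMap D hram h0]; omega
      have hadd := D.v_add (algebraMap ℚ_[2] K t) (-z) htK (neg_ne_zero.mpr hz)
        (by rwa [← sub_eq_add_neg])
      rw [← sub_eq_add_neg, v_neg D hz] at hadd
      rcases le_total (D.v (algebraMap ℚ_[2] K t)) (D.v z) with hc | hc
      · omega
      · omega
  have hveq : 2 * (Algebra.norm ℚ_[2] z : ℚ_[2]).valuation
      = D.v z + D.v (algebraMap ℚ_[2] K t - z) := by
    rw [← v_algebraMap D hram hNne, hNz, D.v_mul _ _ hz hz'ne]
  omega

lemma norm_unit_val (hquad : Module.finrank ℚ_[2] K = 2) (hram : D.e = 2) {δ : ℕ}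
    (hδ : ∀ x : K, (∀ y : K, (y = 0 ∨ 0 ≤ D.v y) →
        ‖Algebra.trace ℚ_[2] K (x * y)‖ ≤ 1) ↔ (x = 0 ∨ -(δ : ℤ) ≤ D.v x))
    {u : K} (hu : u ≠ 0) (h0 : D.v u = 0) :
    (Algebra.norm ℚ_[2] u : ℚ_[2]).valuation = 0 ∧ ‖(Algebra.norm ℚ_[2] u : ℚ_[2])‖ = 1 := by
  have : FiniteDimensional ℚ_[2] K := FiniteDimensional.of_finrank_eq_succ hquad
  have h1 : (0:ℤ) ≤ (Algebra.norm ℚ_[2] u : ℚ_[2]).valuation := by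
    have := norm_val_ge D hquad hram hδ hu; omega
  have hui : u⁻¹ ≠ 0 := inv_ne_zero hu
  have h2 : (0:ℤ) ≤ (Algebra.norm ℚ_[2] u⁻¹ : ℚ_[2]).valuation := by
    have hv : D.v u⁻¹ = 0 := by rw [v_inv D hu, h0]; ring
    have := norm_val_ge D hquad hram hδ hui; omega
  have hNu : Algebra.norm ℚ_[2] u ≠ 0 := Algebra.norm_ne_zero_iff.mpr hu
  have hNui : Algebra.norm ℚ_[2] u⁻¹ ≠ 0 := Algebra.norm_ne_zero_iff.mpr hui
  have hprod : Algebra.norm ℚ_[2] u⁻¹ * Algebra.norm ℚ_[2] u = 1 := by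
    rw [← map_mul, inv_mul_cancel₀ hu, map_one]
  have hval : (Algebra.norm ℚ_[2] u⁻¹ : ℚ_[2]).valuation
      + (Algebra.norm ℚ_[2] u : ℚ_[2]).valuation = 0 := by
    rw [← Padic.valuation_mul hNui hNu, hprod, Padic.valuation_one]
  have hv0 : (Algebra.norm ℚ_[2] u : ℚ_[2]).valuation = 0 := by omega
  refine ⟨hv0, ?_⟩
  rw [Padic.norm_eq_zpow_neg_valuation hNu, hv0]
  norm_num

end NormLemmas

/-- Let `K/ℚ₂` be ramified quadratic, `δ` the `2`-adic valuation of the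
discriminant of `K/ℚ₂`, and `ω` the character of order `2` of `ℚ₂^×` with kernel
`N_{K/ℚ₂}(K^×)` and conductor `a(ω) = δ`.  Then for every character `φ` of `ℚ₂^×` with
`a(φ) ≥ δ + 1` one has `a(φ ∘ N_{K/ℚ₂}) = 2·a(φ) − δ`; in particular `a(φ ∘ N_{K/ℚ₂})`
has the same parity as `δ`. -/
theorem conductor_norm_ramified_two (K : Type*) [Field K] [Algebra ℚ_[2] K]
    (hquad : Module.finrank ℚ_[2] K = 2) (D : PadicValData 2 K) (hram : D.e = 2)
    (δ : ℕ)
    (hδ : ∀ x : K, (∀ y : K, (y = 0 ∨ 0 ≤ D.v y) →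
        ‖Algebra.trace ℚ_[2] K (x * y)‖ ≤ 1) ↔ (x = 0 ∨ -(δ : ℤ) ≤ D.v x))
    (ω : (ℚ_[2])ˣ →* ℂˣ) (hω_ne : ω ≠ 1) (hω_sq : ω ^ 2 = 1)
    (hker : ∀ x : (ℚ_[2])ˣ, ω x = 1 ↔
      ∃ y : Kˣ, Units.map (Algebra.norm ℚ_[2] : K →* ℚ_[2]) y = x)
    (hωcond : condQ 2 ω = δ)
    (φ : (ℚ_[2])ˣ →* ℂˣ) (hφ : ∃ i, IsTrivialOnQ 2 φ i) (hφδ : δ + 1 ≤ condQ 2 φ) :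
    (condK D (φ.comp (Units.map (Algebra.norm ℚ_[2] : K →* ℚ_[2]))) : ℤ)
        = 2 * condQ 2 φ - δ ∧
    condK D (φ.comp (Units.map (Algebra.norm ℚ_[2] : K →* ℚ_[2]))) % 2 = δ % 2 := by
  have hfd : FiniteDimensional ℚ_[2] K := FiniteDimensional.of_finrank_eq_succ hquad
  set n := condQ 2 φ with hn
  have hδ1 : 1 ≤ δ := delta_pos D hquad hram hδ
  have hn2 : δ + 1 ≤ n := hφδ
  have hQn : IsTrivialOnQ 2 φ n := Nat.sInf_mem hφ
  set Nm : K →* ℚ_[2] := (Algebra.norm ℚ_[2] : K →* ℚ_[2]) with hNm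
  set κ : Kˣ →* ℂˣ := φ.comp (Units.map Nm) with hκ
  have hκapp : ∀ u : Kˣ, κ u = φ (Units.map Nm u) := fun u => rfl
  -- triviality of κ on U_K^{2n-δ}
  have hSmem : IsTrivialOnK D κ (2 * n - δ) := by
    intro u hu hcond
    have hune : (u : K) ≠ 0 := u.ne_zero
    rcases eq_or_ne ((u : K) - 1) 0 with h1 | hxne
    · have : u = 1 := Units.ext (by rw [Units.val_one]; linear_combination h1)
      rw [this, map_one]
    · have h1 : ((2 * n - δ : ℕ) : ℤ) ≤ D.v ((u : K) - 1) := hcond.resolve_left hxne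
      set x : K := (u : K) - 1 with hx
      have hvx : (2 * (n:ℤ) - δ) ≤ D.v x := by omega
      have hux : (u : K) = 1 + x := by rw [hx]; ring
      have hNu : Nm (u : K) = 1 + Algebra.trace ℚ_[2] K x + Nm x := by
        rw [hNm]
        show Algebra.norm ℚ_[2] (u : K) = _
        rw [hux]
        exact norm_one_add hquad x
      have hNxne : Nm x ≠ 0 := Algebra.norm_ne_zero_iff.mpr hxne
      have hT : ‖Algebra.trace ℚ_[2] K x‖ ≤ ((2:ℕ):ℝ) ^ (-(n:ℤ)) :=
        trace_le D hram hδ n hxne (by omega)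
      have hNx : ‖Nm x‖ ≤ ((2:ℕ):ℝ) ^ (-(n:ℤ)) := by
        rw [padic_norm_le_iff hNxne, hNm]
        have := norm_val_ge D hquad hram hδ hxne
        omega
      have hNunorm : ‖Nm (u : K)‖ = 1 :=
        (norm_unit_val D hquad hram hδ hune hu).2
      have hNusub : ‖Nm (u : K) - 1‖ ≤ ((2:ℕ):ℝ) ^ (-(n:ℤ)) := by
        have heq : Nm (u : K) - 1 = Algebra.trace ℚ_[2] K x + Nm x := by
          rw [hNu]; ring
        rw [heq]
        exact le_trans (Padic.nonarchimedean _ _) (max_le hT hNx)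
      rw [hκapp u]
      exact hQn (Units.map Nm u) (by simpa using hNunorm) (by simpa using hNusub)
  -- nontriviality of κ on U_K^{2n-δ-1}
  have hSnot : ¬ IsTrivialOnK D κ (2 * n - δ - 1) := by
    intro htriv
    have hn1 : ¬ IsTrivialOnQ 2 φ (n - 1) := by
      intro h
      have : condQ 2 φ ≤ n - 1 := Nat.sInf_le h
      omega
    unfold IsTrivialOnQ at hn1
    push_neg at hn1
    obtain ⟨w, hwnorm, hwsub, hwne⟩ := hn1
    have hw1 : (w : ℚ_[2]) - 1 ≠ 0 := by
      intro h0
      have : w = 1 := Units.ext (by rw [Units.val_one]; linear_combination h0)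
      rw [this, map_one] at hwne
      exact hwne rfl
    obtain ⟨x, hxne, hvx, htne, hval⟩ := trace_sharp D hram hδ (n : ℤ)
    have hwval : ((n:ℤ) - 1) ≤ ((w : ℚ_[2]) - 1).valuation := by
      rw [← padic_norm_le_iff hw1]
      have hcast : (((n - 1 : ℕ)) : ℤ) = (n : ℤ) - 1 := by omega
      rwa [hcast] at hwsub
    set a : ℚ_[2] := ((w : ℚ_[2]) - 1) / Algebra.trace ℚ_[2] K x with ha
    have hane : a ≠ 0 := div_ne_zero hw1 htne
    have haval : 0 ≤ a.valuation := by
      have hmul : (w : ℚ_[2]) - 1 = a * Algebra.trace ℚ_[2] K x := by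
        rw [ha, div_mul_cancel₀ _ htne]
      have hvm := Padic.valuation_mul hane htne
      rw [← hmul] at hvm
      omega
    have haK : algebraMap ℚ_[2] K a ≠ 0 := by simp [map_eq_zero, hane]
    set xt : K := algebraMap ℚ_[2] K a * x with hxt
    have hxtne : xt ≠ 0 := mul_ne_zero haK hxne
    have hvxt : 2 * (n:ℤ) - 1 - δ ≤ D.v xt := by
      rw [hxt, D.v_mul _ _ haK hxne, v_algebraMap D hram hane]
      omega
    have htrxt : Algebra.trace ℚ_[2] K xt = (w : ℚ_[2]) - 1 := by
      rw [hxt, ← Algebra.smul_def, map_smul, smul_eq_mul, ha, div_mul_cancel₀ _ htne]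
    obtain ⟨hu0ne, hvu0⟩ := v_strict D (a := (1:K)) (b := xt) one_ne_zero hxtne
      (by rw [v_one D]; omega)
    set u0 : Kˣ := Units.mk0 (1 + xt) hu0ne with hu0
    have hu0coe : (u0 : K) = 1 + xt := rfl
    have hNu0 : Nm (u0 : K) = (w : ℚ_[2]) + Nm xt := by
      rw [hu0coe, hNm]
      show Algebra.norm ℚ_[2] (1 + xt) = _
      rw [norm_one_add hquad xt, htrxt]
      ring
    have hNxtne : Nm xt ≠ 0 := Algebra.norm_ne_zero_iff.mpr hxtne
    have hNxt : ‖Nm xt‖ ≤ ((2:ℕ):ℝ) ^ (-(n:ℤ)) := by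
      rw [padic_norm_le_iff hNxtne, hNm]
      have := norm_val_ge D hquad hram hδ hxtne
      omega
    have hvu0' : D.v (u0 : K) = 0 := by rw [hu0coe]; rw [v_one D] at hvu0; exact hvu0
    have hNu0norm : ‖Nm (u0 : K)‖ = 1 :=
      (norm_unit_val D hquad hram hδ u0.ne_zero hvu0').2
    set τ : (ℚ_[2])ˣ := Units.map Nm u0 * w⁻¹ with hτ
    have hτcoe : (τ : ℚ_[2]) = Nm (u0 : K) * ((w : ℚ_[2]))⁻¹ := by
      rw [hτ]
      simp
    have hwinv : ‖((w : ℚ_[2]))⁻¹‖ = 1 := by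
      rw [norm_inv, hwnorm]; norm_num
    have hτnorm : ‖(τ : ℚ_[2])‖ = 1 := by
      rw [hτcoe, norm_mul, hNu0norm, hwinv]; norm_num
    have hτsub : ‖(τ : ℚ_[2]) - 1‖ ≤ ((2:ℕ):ℝ) ^ (-(n:ℤ)) := by
      have hwne0 : (w : ℚ_[2]) ≠ 0 := w.ne_zero
      have heq : (τ : ℚ_[2]) - 1 = Nm xt * ((w : ℚ_[2]))⁻¹ := by
        rw [hτcoe, hNu0]
        field_simp
        ring
      rw [heq, norm_mul, hwinv, mul_one]
      exact hNxt
    have hτ1 : φ τ = 1 := hQn τ hτnorm hτsub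
    have hκu0 : κ u0 = φ w := by
      have hτw : τ * w = Units.map Nm u0 := by
        rw [hτ, inv_mul_cancel_right]
      rw [hκapp u0, ← hτw, map_mul, hτ1, one_mul]
    have hvdiff : (u0 : K) - 1 = xt := by rw [hu0coe]; ring
    have := htriv u0 hvu0' (Or.inr (by rw [hvdiff]; omega))
    rw [hκu0] at this
    exact hwne this
  -- conclude
  have hmono : ∀ {i j : ℕ}, i ≤ j → IsTrivialOnK D κ i → IsTrivialOnK D κ j := by
    intro i j hij h u hu hc
    refine h u hu (hc.imp id (fun hh => le_trans ?_ hh))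
    omega
  have hne : Set.Nonempty {i | IsTrivialOnK D κ i} := ⟨_, hSmem⟩
  have hmem : IsTrivialOnK D κ (condK D κ) := Nat.sInf_mem hne
  have hle : condK D κ ≤ 2 * n - δ := Nat.sInf_le hSmem
  have hcondK : condK D κ = 2 * n - δ := by
    rcases lt_or_ge (condK D κ) (2 * n - δ) with hlt | hge
    · exact absurd (hmono (by omega) hmem) hSnot
    · omega
  constructor
  · omega
  · omega
end
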